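/- arXiv:1309.5413 — 5 statements merged into one kernel-verified Lean document; each statement's English description precedes it below -/
import Mathlib

section
/- Let X ~ Gamma(k, k-1) with k ≥ 2 an integer, and let g(γ) = γ/exp(γ-1). Then for all γ ≥ 1, P(X ≥ γ E[X]) ≤ g(γ)^k, and for all 0 < γ ≤ 1, P(X ≤ γ E[X]) ≤ g(γ)^k. -/
open MeasureTheory ProbabilityTheory Real

lemma gamma_tilt_pointwise (k : ℕ) (r θ t : ℝ) (hrθ : 0 < r - θ) (x : ℝ) :
    Real.exp (θ * (x - t)) * gammaPDFReal k r x
      = Real.exp (-(θ * t)) * (r / (r - θ)) ^ k * gammaPDFReal k (r - θ) x := by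
  unfold gammaPDFReal
  split_ifs with hx
  · rw [Real.rpow_natCast, Real.rpow_natCast]
    have hpow : (r : ℝ) ^ k = (r / (r - θ)) ^ k * (r - θ) ^ k := by
      rw [div_pow, div_mul_cancel₀]
      exact pow_ne_zero _ hrθ.ne'
    have hexp : Real.exp (θ * (x - t)) * Real.exp (-(r * x))
        = Real.exp (-(θ * t)) * Real.exp (-((r - θ) * x)) := by
      rw [← Real.exp_add, ← Real.exp_add]; ring_nf
    rw [hpow]
    linear_combination ((r / (r - θ)) ^ k * (r - θ) ^ k / Real.Gamma k
      * x ^ ((k : ℝ) - 1)) * hexp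
  · simp

lemma gamma_tilt_bound (k : ℕ) (hk : 0 < k) (r θ t : ℝ) (hr : 0 < r) (hrθ : 0 < r - θ)
    (A : Set ℝ) (hA : MeasurableSet A) (hAt : ∀ x ∈ A, 0 ≤ θ * (x - t)) :
    gammaMeasure k r A ≤ ENNReal.ofReal (Real.exp (-(θ * t)) * (r / (r - θ)) ^ k) := by
  have hkR : (0 : ℝ) < k := by exact_mod_cast hk
  have hc : 0 ≤ Real.exp (-(θ * t)) * (r / (r - θ)) ^ k := by positivity
  rw [gammaMeasure, withDensity_apply _ hA]
  calc ∫⁻ x in A, gammaPDF k r x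
      ≤ ∫⁻ x, ENNReal.ofReal (Real.exp (θ * (x - t)) * gammaPDFReal k r x) := by
        rw [← lintegral_indicator hA]
        refine lintegral_mono fun x ↦ ?_
        by_cases hxA : x ∈ A
        · rw [Set.indicator_of_mem hxA, gammaPDF]
          refine ENNReal.ofReal_le_ofReal ?_
          have hnn : 0 ≤ gammaPDFReal k r x := gammaPDFReal_nonneg hkR hr x
          nlinarith [Real.one_le_exp (hAt x hxA)]
        · simp [Set.indicator_of_notMem hxA]
    _ = ∫⁻ x, ENNReal.ofReal (Real.exp (-(θ * t)) * (r / (r - θ)) ^ k)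
          * ENNReal.ofReal (gammaPDFReal k (r - θ) x) := by
        refine lintegral_congr fun x ↦ ?_
        rw [gamma_tilt_pointwise k r θ t hrθ x, ENNReal.ofReal_mul hc]
    _ = ENNReal.ofReal (Real.exp (-(θ * t)) * (r / (r - θ)) ^ k)
          * ∫⁻ x, gammaPDF k (r - θ) x := by
        rw [lintegral_const_mul]
        · rfl
        · exact (measurable_gammaPDFReal _ _).ennreal_ofReal
    _ = ENNReal.ofReal (Real.exp (-(θ * t)) * (r / (r - θ)) ^ k) := by
        rw [lintegral_gammaPDF_eq_one hkR hrθ, mul_one]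

/-- Chernoff tail bounds for `X ~ Gamma(k, k-1)` with mean `E[X] = k/(k-1)`:
with `g(γ) = γ / exp(γ - 1)`, `P(X ≥ γ E[X]) ≤ g(γ)^k` for `γ ≥ 1`, and
`P(X ≤ γ E[X]) ≤ g(γ)^k` for `0 < γ ≤ 1`. -/
theorem gamma_chernoff (k : ℕ) (hk : 2 ≤ k) (γ : ℝ) :
    (1 ≤ γ →
      gammaMeasure k ((k : ℝ) - 1) {x | γ * ((k : ℝ) / ((k : ℝ) - 1)) ≤ x}
        ≤ ENNReal.ofReal ((γ / Real.exp (γ - 1)) ^ k)) ∧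
    (0 < γ → γ ≤ 1 →
      gammaMeasure k ((k : ℝ) - 1) {x | x ≤ γ * ((k : ℝ) / ((k : ℝ) - 1))}
        ≤ ENNReal.ofReal ((γ / Real.exp (γ - 1)) ^ k)) := by
  have hk1 : (0 : ℝ) < (k : ℝ) - 1 := by
    have : (2 : ℝ) ≤ k := by exact_mod_cast hk
    linarith
  constructor
  · intro hγ
    have hγ0 : 0 < γ := lt_of_lt_of_le one_pos hγ
    set r : ℝ := (k : ℝ) - 1
    set t : ℝ := γ * ((k : ℝ) / r)
    set θ : ℝ := r * (γ - 1) / γ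
    have hrθ : r - θ = r / γ := by field_simp [θ]; simp only [θ]; field_simp; ring
    have hrθ' : 0 < r - θ := by rw [hrθ]; positivity
    have hfinal : Real.exp (-(θ * t)) * (r / (r - θ)) ^ k
        = (γ / Real.exp (γ - 1)) ^ k := by
      have h1 : θ * t = k * (γ - 1) := by
        field_simp [θ, t]; simp only [θ, t]; field_simp
      have h2 : r / (r - θ) = γ := by
        rw [hrθ]; field_simp
      rw [h1, h2, div_pow, ← Real.exp_nat_mul, Real.exp_neg]
      ring
    rw [← hfinal]
    refine gamma_tilt_bound k (by omega) r θ t hk1 hrθ' _ measurableSet_Ici fun x hx ↦ ?_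
    have hθ : 0 ≤ θ := by
      have : 0 ≤ γ - 1 := by linarith
      positivity
    exact mul_nonneg hθ (by simpa [sub_nonneg] using hx)
  · intro hγ0 hγ
    set r : ℝ := (k : ℝ) - 1
    set t : ℝ := γ * ((k : ℝ) / r)
    set θ : ℝ := r * (γ - 1) / γ
    have hrθ : r - θ = r / γ := by field_simp [θ]; simp only [θ]; field_simp; ring
    have hrθ' : 0 < r - θ := by rw [hrθ]; positivity
    have hfinal : Real.exp (-(θ * t)) * (r / (r - θ)) ^ k
        = (γ / Real.exp (γ - 1)) ^ k := by
      have h1 : θ * t = k * (γ - 1) := by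
        field_simp [θ, t]; simp only [θ, t]; field_simp
      have h2 : r / (r - θ) = γ := by
        rw [hrθ]; field_simp
      rw [h1, h2, div_pow, ← Real.exp_nat_mul, Real.exp_neg]
      ring
    rw [← hfinal]
    refine gamma_tilt_bound k (by omega) r θ t hk1 hrθ' _ measurableSet_Iic fun x hx ↦ ?_
    have hθ : θ ≤ 0 := by
      apply div_nonpos_of_nonpos_of_nonneg _ hγ0.le
      nlinarith
    have hxt : x - t ≤ 0 := by simpa [sub_nonpos] using hx
    nlinarith
end

section
/- Let ε ∈ (0, 3/14), δ ∈ (0,1), and let k ≥ 2 ε^(-2) (1 - (14/3)ε)^(-1) ln(2/δ) be an integer. If X ~ Gamma(k, k-1), then P(|1/X - 1| > ε) < δ. -/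
open MeasureTheory ProbabilityTheory Real

set_option maxHeartbeats 1000000

lemma taylor2 {x : ℝ} (h : |x| < 1) :
    |x + x ^ 2 / 2 + Real.log (1 - x)| ≤ |x| ^ 3 / (1 - |x|) := by
  have := Real.abs_log_sub_add_sum_range_le h 2
  norm_num [Finset.sum_range_succ] at this
  convert this using 3

lemma scalar_up (ε L K : ℝ) (hε1 : 0 < ε) (hε2 : ε < 3/14) (hL : Real.log 2 ≤ L)
    (hK : 2 * L ≤ K * (ε ^ 2 * (1 - 14/3 * ε))) :
    K * (Real.log (K - 1) - Real.log (K * (1 - ε)))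
      + (K * (1 - ε) - (K - 1)) * (1 - ε)⁻¹ < -L := by
  have hL0 : 0.69 < L := by
    have := Real.log_two_gt_d9; linarith
  have hg : 0 < 1 - 14/3 * ε := by linarith
  have hd : 0 < 1 - ε := by linarith
  have hK2 : 2 ≤ K := by nlinarith [mul_pos (pow_pos hε1 2) hg]
  have hK0 : 0 < K := by linarith
  have hKm1 : 0 < K - 1 := by linarith
  have hKe2 : 2 * L ≤ K * ε ^ 2 := by
    nlinarith [mul_nonneg (mul_nonneg hK0.le (sq_nonneg ε)) hε1.le]
  have hKε : 6 ≤ K * ε := by nlinarith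
  set w := ε ^ 3 / (1 - ε) with hw_def
  have hw : w * (1 - ε) = ε ^ 3 := div_mul_cancel₀ _ hd.ne'
  have hw0 : 0 ≤ w := by positivity
  have hwub : w ≤ 14/11 * ε ^ 3 := by
    nlinarith [mul_le_mul_of_nonneg_left hε2.le hw0]
  have habs : |ε| < 1 := by rw [abs_of_pos hε1]; linarith
  have ht := taylor2 habs
  rw [abs_of_pos hε1] at ht
  have hub : -Real.log (1 - ε) ≤ ε + ε ^ 2 / 2 + w := by
    have := (abs_le.mp ht).1
    linarith
  have h1 : Real.log ((K - 1) / K) ≤ (K - 1) / K - 1 :=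
    Real.log_le_sub_one_of_pos (div_pos hKm1 hK0)
  rw [Real.log_div hKm1.ne' hK0.ne'] at h1
  have h1' : (K - 1) / K - 1 = -(1 / K) := by field_simp; ring
  have h2 : Real.log (K - 1) - Real.log K ≤ -(1 / K) := by linarith
  have h3 : K * (Real.log (K - 1) - Real.log K) ≤ -1 := by
    have := mul_le_mul_of_nonneg_left h2 hK0.le
    rwa [mul_neg, mul_one_div, div_self hK0.ne'] at this
  rw [Real.log_mul hK0.ne' hd.ne']
  set q := (K * (1 - ε) - (K - 1)) * (1 - ε)⁻¹ with hq_def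
  have hq : q * (1 - ε) = 1 - K * ε := by
    rw [hq_def, mul_assoc, inv_mul_cancel₀ hd.ne', mul_one]; ring
  have hqub : q ≤ 1 - K * ε + ε - K * ε ^ 2 := by
    nlinarith [hq, hd, mul_nonneg (sq_nonneg ε) (by linarith : (0:ℝ) ≤ K * ε - 1)]
  have h8 : 2 * L * ε ≤ K * (ε ^ 2 * (1 - 14/3 * ε)) * ε :=
    mul_le_mul_of_nonneg_right hK hε1.le
  have h9 : (0:ℝ) ≤ K * ε ^ 4 := by positivity
  have h10 : K * w ≤ 14/11 * (K * ε ^ 3) := by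
    have := mul_le_mul_of_nonneg_left hwub hK0.le
    linarith
  have hfin2 : -1 + K * (ε + ε ^ 2 / 2 + w) + q < -L := by
    nlinarith [hqub, h8, h9, h10, hK,
      mul_pos hε1 (show (0:ℝ) < 70/33 * L - 1 by linarith)]
  have h7 : K * (-Real.log (1 - ε)) ≤ K * (ε + ε ^ 2 / 2 + w) :=
    mul_le_mul_of_nonneg_left hub hK0.le
  nlinarith [h3, h7, hfin2]

lemma scalar_lo (ε L K : ℝ) (hε1 : 0 < ε) (hε2 : ε < 3/14) (hL : Real.log 2 ≤ L)
    (hK : 2 * L ≤ K * (ε ^ 2 * (1 - 14/3 * ε))) :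
    K * (Real.log (K - 1) - Real.log (K * (1 + ε)))
      + (K * (1 + ε) - (K - 1)) * (1 + ε)⁻¹ < -L := by
  have hL0 : 0.69 < L := by
    have := Real.log_two_gt_d9; linarith
  have hg : 0 < 1 - 14/3 * ε := by linarith
  have hd : 0 < 1 - ε := by linarith
  have he : 0 < 1 + ε := by linarith
  have hK2 : 2 ≤ K := by nlinarith [mul_pos (pow_pos hε1 2) hg]
  have hK0 : 0 < K := by linarith
  have hKm1 : 0 < K - 1 := by linarith
  set w := ε ^ 3 / (1 - ε) with hw_def
  have hw : w * (1 - ε) = ε ^ 3 := div_mul_cancel₀ _ hd.ne'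
  have hw0 : 0 ≤ w := by positivity
  have hwub : w ≤ 14/11 * ε ^ 3 := by
    nlinarith [mul_le_mul_of_nonneg_left hε2.le hw0]
  have habs : |(-ε)| < 1 := by rw [abs_neg, abs_of_pos hε1]; linarith
  have ht := taylor2 habs
  rw [abs_neg, abs_of_pos hε1] at ht
  have ht' : |-ε + ε ^ 2 / 2 + Real.log (1 + ε)| ≤ w := by
    have hh : -ε + (-ε) ^ 2 / 2 + Real.log (1 - -ε) = -ε + ε ^ 2 / 2 + Real.log (1 + ε) := by
      ring_nf
    rw [hh] at ht
    exact ht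
  have hlb : ε - ε ^ 2 / 2 - w ≤ Real.log (1 + ε) := by
    have := (abs_le.mp ht').1
    linarith
  have h1 : Real.log ((K - 1) / K) ≤ (K - 1) / K - 1 :=
    Real.log_le_sub_one_of_pos (div_pos hKm1 hK0)
  rw [Real.log_div hKm1.ne' hK0.ne'] at h1
  have h1' : (K - 1) / K - 1 = -(1 / K) := by field_simp; ring
  have h2 : Real.log (K - 1) - Real.log K ≤ -(1 / K) := by linarith
  have h3 : K * (Real.log (K - 1) - Real.log K) ≤ -1 := by
    have := mul_le_mul_of_nonneg_left h2 hK0.le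
    rwa [mul_neg, mul_one_div, div_self hK0.ne'] at this
  rw [Real.log_mul hK0.ne' he.ne']
  set q := (K * (1 + ε) - (K - 1)) * (1 + ε)⁻¹ with hq_def
  have hq : q * (1 + ε) = K * ε + 1 := by
    rw [hq_def, mul_assoc, inv_mul_cancel₀ he.ne', mul_one]; ring
  have hKε0 : (0:ℝ) ≤ K * ε := by positivity
  have hqub : q ≤ (K * ε + 1) * (1 - ε + ε ^ 2) := by
    nlinarith [hq, he, mul_nonneg (by linarith : (0:ℝ) ≤ K * ε + 1) (pow_nonneg hε1.le 3)]
  have hc : (0:ℝ) < 1/2 - 25/11 * ε := by linarith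
  have h11 : 2 * L * (1/2 - 25/11 * ε) ≤ K * (ε ^ 2 * (1 - 14/3 * ε)) * (1/2 - 25/11 * ε) :=
    mul_le_mul_of_nonneg_right hK hc.le
  have h12 : (L - ε + ε ^ 2) * (1 - 14/3 * ε) < 2 * L * (1/2 - 25/11 * ε) := by
    nlinarith [mul_pos hε1 (show (0:ℝ) < L by linarith),
      mul_pos (mul_pos hε1 hd) hg]
  have h14 : L - ε + ε ^ 2 < K * ε ^ 2 * (1/2 - 25/11 * ε) := by
    have h13 : (L - ε + ε ^ 2) * (1 - 14/3 * ε) <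
        (K * ε ^ 2 * (1/2 - 25/11 * ε)) * (1 - 14/3 * ε) := by nlinarith [h11, h12]
    exact lt_of_mul_lt_mul_right h13 hg.le
  have h10 : K * w ≤ 14/11 * (K * ε ^ 3) := by
    have := mul_le_mul_of_nonneg_left hwub hK0.le
    linarith
  have hfin2 : -1 - K * (ε - ε ^ 2 / 2 - w) + q < -L := by
    nlinarith [h14, hqub, h10]
  have h7 : K * (ε - ε ^ 2 / 2 - w) ≤ K * Real.log (1 + ε) :=
    mul_le_mul_of_nonneg_left hlb hK0.le
  nlinarith [h3, h7, hfin2]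

lemma gammaPDFReal_tilt (c r s x : ℝ) (hs : 0 < s) (hx : 0 ≤ x) :
    gammaPDFReal c r x = (r ^ c / s ^ c) * Real.exp ((s - r) * x) * gammaPDFReal c s x := by
  rw [gammaPDFReal, if_pos hx, gammaPDFReal, if_pos hx]
  have hsc : (0:ℝ) < s ^ c := Real.rpow_pos_of_pos hs c
  have hexp : Real.exp ((s - r) * x) * Real.exp (-(s * x)) = Real.exp (-(r * x)) := by
    rw [← Real.exp_add]; ring_nf
  rw [← hexp]
  field_simp

lemma gamma_tail_bound (c r s C : ℝ) (hc : 0 < c) (hs : 0 < s) {S : Set ℝ}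
    (hS : MeasurableSet S) (hC : 0 ≤ C)
    (hpt : ∀ x ∈ S, gammaPDFReal c r x ≤ C * gammaPDFReal c s x) :
    gammaMeasure c r S ≤ ENNReal.ofReal C := by
  rw [gammaMeasure, withDensity_apply _ hS]
  calc ∫⁻ x in S, gammaPDF c r x
      ≤ ∫⁻ x in S, ENNReal.ofReal C * gammaPDF c s x := by
        refine setLIntegral_mono (Measurable.const_mul ((measurable_gammaPDFReal c s).ennreal_ofReal :
            Measurable (gammaPDF c s)) _) fun x hx => ?_
        rw [gammaPDF, gammaPDF, ← ENNReal.ofReal_mul hC]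
        exact ENNReal.ofReal_le_ofReal (hpt x hx)
    _ = ENNReal.ofReal C * ∫⁻ x in S, gammaPDF c s x :=
        lintegral_const_mul _ ((measurable_gammaPDFReal c s).ennreal_ofReal :
          Measurable (gammaPDF c s))
    _ ≤ ENNReal.ofReal C * 1 := by
        gcongr
        rw [← lintegral_gammaPDF_eq_one hc hs]
        exact setLIntegral_le_lintegral _ _
    _ = ENNReal.ofReal C := mul_one _

/-- For `ε ∈ (0, 3/14)`, `δ ∈ (0,1)` and an integer
`k ≥ 2 ε⁻² (1 - (14/3)ε)⁻¹ ln(2/δ)`, if `X ~ Gamma(k, k-1)` then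
`P(|1/X - 1| > ε) < δ`. -/
theorem gbas_accuracy (ε δ : ℝ) (hε : ε ∈ Set.Ioo (0 : ℝ) (3/14))
    (hδ : δ ∈ Set.Ioo (0 : ℝ) 1) (k : ℕ)
    (hk : 2 * ε⁻¹ ^ 2 * (1 - (14/3) * ε)⁻¹ * Real.log (2 / δ) ≤ (k : ℝ)) :
    gammaMeasure k ((k : ℝ) - 1) {x | ε < |x⁻¹ - 1|} < ENNReal.ofReal δ := by
  obtain ⟨hε1, hε2⟩ := hε
  obtain ⟨hδ1, hδ2⟩ := hδ
  set K := (k : ℝ) with hKdef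
  set L := Real.log (2 / δ) with hLdef
  have hL : Real.log 2 ≤ L := by
    rw [hLdef]
    apply (Real.log_le_log_iff (by norm_num) (by positivity)).mpr
    rw [le_div_iff₀ hδ1]; nlinarith
  have hL0 : 0.69 < L := by have := Real.log_two_gt_d9; linarith
  have hg : 0 < 1 - 14/3 * ε := by linarith
  have hd : 0 < 1 - ε := by linarith
  have he : 0 < 1 + ε := by linarith
  have hK : 2 * L ≤ K * (ε ^ 2 * (1 - 14/3 * ε)) := by
    have hpos : 0 < ε ^ 2 * (1 - 14/3 * ε) := by positivity
    have heq : 2 * ε⁻¹ ^ 2 * (1 - (14/3) * ε)⁻¹ * L = 2 * L / (ε ^ 2 * (1 - 14/3 * ε)) := by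
      field_simp
    rw [heq] at hk
    exact (div_le_iff₀ hpos).mp hk
  have hK2 : 2 ≤ K := by nlinarith [mul_pos (pow_pos hε1 2) hg]
  have hK0 : 0 < K := by linarith
  have hKm1 : 0 < K - 1 := by linarith
  have hKe2 : 2 * L ≤ K * ε ^ 2 := by
    nlinarith [mul_nonneg (mul_nonneg hK0.le (sq_nonneg ε)) hε1.le]
  have hKε : 1 ≤ K * ε := by nlinarith
  have hsUp : 0 < K * (1 - ε) := mul_pos hK0 hd
  have hsLo : 0 < K * (1 + ε) := mul_pos hK0 he
  have ha : 0 < (1 - ε)⁻¹ := inv_pos.mpr hd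
  have hb : 0 < (1 + ε)⁻¹ := inv_pos.mpr he
  set Cup := ((K - 1) / (K * (1 - ε))) ^ K *
    Real.exp ((K * (1 - ε) - (K - 1)) * (1 - ε)⁻¹) with hCup_def
  set Clo := ((K - 1) / (K * (1 + ε))) ^ K *
    Real.exp ((K * (1 + ε) - (K - 1)) * (1 + ε)⁻¹) with hClo_def
  have hCup0 : 0 < Cup := by
    rw [hCup_def]; positivity
  have hClo0 : 0 < Clo := by
    rw [hClo_def]; positivity
  -- upper tail pointwise bound
  have hptUp : ∀ x ∈ Set.Ioi ((1 - ε)⁻¹),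
      gammaPDFReal K (K - 1) x ≤ Cup * gammaPDFReal K (K * (1 - ε)) x := by
    intro x hx
    have hxa : (1 - ε)⁻¹ < x := hx
    have hx0 : 0 ≤ x := (lt_trans ha hxa).le
    rw [gammaPDFReal_tilt K (K - 1) (K * (1 - ε)) x hsUp hx0, hCup_def,
      Real.div_rpow hKm1.le hsUp.le]
    apply mul_le_mul_of_nonneg_right _ (gammaPDFReal_nonneg hK0 hsUp x)
    apply mul_le_mul_of_nonneg_left _ (by positivity)
    apply Real.exp_le_exp.mpr
    exact mul_le_mul_of_nonpos_left hxa.le (by nlinarith : K * (1 - ε) - (K - 1) ≤ 0)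
  -- lower tail pointwise bound
  have hptLo : ∀ x ∈ Set.Iio ((1 + ε)⁻¹),
      gammaPDFReal K (K - 1) x ≤ Clo * gammaPDFReal K (K * (1 + ε)) x := by
    intro x hx
    have hxb : x < (1 + ε)⁻¹ := hx
    rcases lt_or_ge x 0 with hneg | hx0
    · have hz : gammaPDFReal K (K - 1) x = 0 := by
        rw [gammaPDFReal, if_neg (not_le.mpr hneg)]
      rw [hz]
      exact mul_nonneg hClo0.le (gammaPDFReal_nonneg hK0 hsLo x)
    · rw [gammaPDFReal_tilt K (K - 1) (K * (1 + ε)) x hsLo hx0, hClo_def,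
        Real.div_rpow hKm1.le hsLo.le]
      apply mul_le_mul_of_nonneg_right _ (gammaPDFReal_nonneg hK0 hsLo x)
      apply mul_le_mul_of_nonneg_left _ (by positivity)
      apply Real.exp_le_exp.mpr
      exact mul_le_mul_of_nonneg_left hxb.le (by nlinarith : 0 ≤ K * (1 + ε) - (K - 1))
  have h_up : gammaMeasure K (K - 1) (Set.Ioi ((1 - ε)⁻¹)) ≤ ENNReal.ofReal Cup :=
    gamma_tail_bound K (K - 1) (K * (1 - ε)) Cup hK0 hsUp measurableSet_Ioi hCup0.le hptUp
  have h_lo : gammaMeasure K (K - 1) (Set.Iio ((1 + ε)⁻¹)) ≤ ENNReal.ofReal Clo :=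
    gamma_tail_bound K (K - 1) (K * (1 + ε)) Clo hK0 hsLo measurableSet_Iio hClo0.le hptLo
  -- Cup < δ/2
  have hhalf : Real.log (δ / 2) = -L := by
    rw [hLdef, Real.log_div hδ1.ne' two_ne_zero, Real.log_div two_ne_zero hδ1.ne']; ring
  have hCup : Cup < δ / 2 := by
    have hlogCup : Real.log Cup = K * (Real.log (K - 1) - Real.log (K * (1 - ε)))
        + (K * (1 - ε) - (K - 1)) * (1 - ε)⁻¹ := by
      rw [hCup_def, Real.log_mul (Real.rpow_pos_of_pos (div_pos hKm1 hsUp) K).ne'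
        (Real.exp_ne_zero _), Real.log_rpow (div_pos hKm1 hsUp),
        Real.log_div hKm1.ne' hsUp.ne', Real.log_exp]
    have hlt := scalar_up ε L K hε1 hε2 hL hK
    rw [← hlogCup, ← hhalf] at hlt
    exact (Real.log_lt_log_iff hCup0 (by linarith)).mp hlt
  have hClo : Clo < δ / 2 := by
    have hlogClo : Real.log Clo = K * (Real.log (K - 1) - Real.log (K * (1 + ε)))
        + (K * (1 + ε) - (K - 1)) * (1 + ε)⁻¹ := by
      rw [hClo_def, Real.log_mul (Real.rpow_pos_of_pos (div_pos hKm1 hsLo) K).ne'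
        (Real.exp_ne_zero _), Real.log_rpow (div_pos hKm1 hsLo),
        Real.log_div hKm1.ne' hsLo.ne', Real.log_exp]
    have hlt := scalar_lo ε L K hε1 hε2 hL hK
    rw [← hlogClo, ← hhalf] at hlt
    exact (Real.log_lt_log_iff hClo0 (by linarith)).mp hlt
  -- event inclusion
  have hsub : {x : ℝ | ε < |x⁻¹ - 1|} ⊆ Set.Iio ((1 + ε)⁻¹) ∪ Set.Ioi ((1 - ε)⁻¹) := by
    intro x hx
    simp only [Set.mem_setOf_eq] at hx
    rcases le_or_gt x 0 with h0 | h0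
    · exact Or.inl (lt_of_le_of_lt h0 hb)
    · rcases lt_abs.mp hx with h | h
      · left
        rw [Set.mem_Iio, ← one_div, lt_div_iff₀ he]
        have h4 := mul_lt_mul_of_pos_left (show 1 + ε < x⁻¹ by linarith) h0
        rw [mul_inv_cancel₀ h0.ne'] at h4
        linarith
      · right
        rw [Set.mem_Ioi, ← one_div, div_lt_iff₀ hd]
        have h4 := mul_lt_mul_of_pos_left (show x⁻¹ < 1 - ε by linarith) h0
        rw [mul_inv_cancel₀ h0.ne'] at h4
        linarith
  calc gammaMeasure K (K - 1) {x | ε < |x⁻¹ - 1|}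
      ≤ gammaMeasure K (K - 1) (Set.Iio ((1 + ε)⁻¹) ∪ Set.Ioi ((1 - ε)⁻¹)) :=
        measure_mono hsub
    _ ≤ gammaMeasure K (K - 1) (Set.Iio ((1 + ε)⁻¹))
        + gammaMeasure K (K - 1) (Set.Ioi ((1 - ε)⁻¹)) := measure_union_le _ _
    _ ≤ ENNReal.ofReal Clo + ENNReal.ofReal Cup := add_le_add h_lo h_up
    _ = ENNReal.ofReal (Clo + Cup) := (ENNReal.ofReal_add hClo0.le hCup0.le).symm
    _ < ENNReal.ofReal δ := (ENNReal.ofReal_lt_ofReal_iff hδ1).mpr (by linarith)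
end

section
/- Let ε > 0, 0 < p_0 ≤ 1/2, and p_1 = p_0/(1+ε)^2. Define ω_0 = p_0 ln(p_1/p_0) + (1 - p_0) ln((1 - p_1)/(1 - p_0)). Then ω_0 ≥ -5 p_0 ε^2 / (1 + 2ε). -/
open Real

lemma quad_le_log {x : ℝ} (hx : 0 ≤ x) : x - x^2/2 ≤ Real.log (1+x) := by
  set f : ℝ → ℝ := fun y => Real.log (1+y) - y + y^2/2 with hf
  have key : ∀ t : ℝ, 0 ≤ t → HasDerivAt f (1/(1+t) - 1 + t) t := by
    intro t ht
    have h1 : HasDerivAt (fun y : ℝ => 1 + y) 1 t := by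
      simpa using (hasDerivAt_id t).const_add 1
    have h2 : HasDerivAt (fun y => Real.log (1+y)) (1/(1+t)) t := by
      have := (Real.hasDerivAt_log (by linarith : (1:ℝ)+t ≠ 0)).comp t h1
      simpa [one_div, Function.comp_def] using this
    have h3 : HasDerivAt (fun y : ℝ => y^2/2) t t := by
      have := (hasDerivAt_pow 2 t).div_const 2
      simpa [mul_comm] using this
    exact (h2.sub (hasDerivAt_id t)).add h3
  have hmono : MonotoneOn f (Set.Ici 0) := by
    apply monotoneOn_of_deriv_nonneg (convex_Ici 0)
    · exact fun t ht => (key t ht).differentiableAt.continuousAt.continuousWithinAt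
    · intro t ht
      rw [interior_Ici] at ht
      exact ((key t (le_of_lt ht)).differentiableAt).differentiableWithinAt
    · intro t ht
      rw [interior_Ici] at ht
      rw [(key t (le_of_lt ht)).deriv]
      have h1t : (0:ℝ) < 1 + t := by linarith [ht.out]
      have : 1/(1+t) - 1 + t = t^2/(1+t) := by field_simp; ring
      rw [this]
      positivity
  have h0 : f 0 ≤ f x := hmono (Set.self_mem_Ici) hx hx
  simp only [hf] at h0
  simp at h0
  linarith

/-- For `ε > 0`, `0 < p₀ ≤ 1/2` and `p₁ = p₀/(1+ε)²`,
`ω₀ = p₀ ln(p₁/p₀) + (1-p₀) ln((1-p₁)/(1-p₀)) ≥ -5 p₀ ε²/(1+2ε)`. -/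
theorem omega_lower_bound (ε p₀ p₁ : ℝ) (hε : 0 < ε) (hp0 : 0 < p₀)
    (hp0' : p₀ ≤ 1/2) (hp1 : p₁ = p₀ / (1 + ε)^2) :
    -5 * p₀ * ε^2 / (1 + 2*ε)
      ≤ p₀ * Real.log (p₁ / p₀) + (1 - p₀) * Real.log ((1 - p₁) / (1 - p₀)) := by
  have hε1 : (0:ℝ) < 1 + ε := by linarith
  have ha2 : (0:ℝ) < (1+ε)^2 := by positivity
  have hq : (0:ℝ) < 1 - p₀ := by linarith
  have h2e : (0:ℝ) < 1 + 2*ε := by linarith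
  set w : ℝ := (2*ε+ε^2)/(1+ε)^2 with hw
  have hwpos : 0 ≤ w := by positivity
  have hd : p₀ - p₁ = p₀ * w := by
    rw [hp1, hw]; field_simp; ring
  -- first term
  have hlogε : Real.log (1+ε) ≤ ε := by
    have := Real.log_le_sub_one_of_pos hε1; linarith
  have hratio : p₁ / p₀ = ((1+ε)^2)⁻¹ := by
    rw [hp1]; field_simp
  have hT1 : -2*p₀*ε ≤ p₀ * Real.log (p₁ / p₀) := by
    rw [hratio, Real.log_inv, Real.log_pow]
    have : -(((2:ℕ):ℝ) * Real.log (1+ε)) ≥ -(2*ε) := by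
      push_cast
      nlinarith
    nlinarith [this, hp0.le]
  -- second term
  set x : ℝ := p₀ * w / (1 - p₀) with hx
  have hx0 : 0 ≤ x := by positivity
  have hxeq : (1 - p₁) / (1 - p₀) = 1 + x := by
    rw [hx, hp1, hw]
    field_simp
    ring
  have hT2 : p₀*w - (p₀*w)^2/(2*(1-p₀)) ≤ (1-p₀) * Real.log ((1-p₁)/(1-p₀)) := by
    rw [hxeq]
    have hlog := quad_le_log hx0
    have hmul : (1-p₀) * (x - x^2/2) ≤ (1-p₀) * Real.log (1+x) :=
      mul_le_mul_of_nonneg_left hlog hq.le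
    have heq : (1-p₀) * (x - x^2/2) = p₀*w - (p₀*w)^2/(2*(1-p₀)) := by
      rw [hx]; field_simp
    linarith [hmul, heq ▸ hmul]
  -- the scalar inequality in ε
  have hone : -(5*ε^2)/(1+2*ε) ≤ -(2*ε) + w - w^2/2 := by
    rw [hw, ← sub_nonneg]
    have hrw : (-(2*ε) + (2*ε+ε^2)/(1+ε)^2 - ((2*ε+ε^2)/(1+ε)^2)^2/2) - (-(5*ε^2)/(1+2*ε))
        = ε^4*(5+6*ε+2*ε^2)/(2*(1+ε)^4*(1+2*ε)) := by
      field_simp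
      ring
    rw [hrw]
    positivity
  -- combine
  have hsq : (p₀*w)^2/(2*(1-p₀)) ≤ p₀ * (w^2/2) := by
    have h1 : (p₀*w)^2/(2*(1-p₀)) ≤ (p₀*w)^2 := div_le_self (sq_nonneg _) (by linarith)
    nlinarith [sq_nonneg w, hp0.le]
  have hchain : -5*p₀*ε^2/(1+2*ε) ≤ -2*p₀*ε + (p₀*w - (p₀*w)^2/(2*(1-p₀))) := by
    have c1 : -5*p₀*ε^2/(1+2*ε) = p₀ * (-(5*ε^2)/(1+2*ε)) := by ring
    have c2 : p₀ * (-(5*ε^2)/(1+2*ε)) ≤ p₀ * (-(2*ε) + w - w^2/2) :=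
      mul_le_mul_of_nonneg_left hone hp0.le
    have c3 : p₀ * (-(2*ε) + w - w^2/2) = -2*p₀*ε + p₀*w - p₀*(w^2/2) := by ring
    linarith [hsq]
  linarith [hT1, hT2, hchain]
end

section
/- Let ε ∈ (0, 3/4). Then for γ'_1 = 1/(1-ε), we have γ'_1/exp(γ'_1 - 1) ≤ exp(-(1/2)ε^2 + (7/3)ε^3), and for γ'_2 = 1/((1-ε^2)(1+ε)), we have γ'_2/exp(γ'_2 - 1) ≤ exp(-(1/2)ε^2 + (7/3)ε^3). -/
open Real

set_option maxHeartbeats 1000000 in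
/-- The two Chernoff-exponent bounds: for `ε ∈ (0, 3/4)`, with
`γ₁' = 1/(1-ε)` and `γ₂' = 1/((1-ε²)(1+ε))`, both `γ/exp(γ-1)` values are at
most `exp(-(1/2)ε² + (7/3)ε³)`. -/
theorem chernoff_exponent_bounds (ε : ℝ) (h0 : 0 < ε) (h1 : ε < 3/4) :
    (1/(1-ε)) / Real.exp (1/(1-ε) - 1)
        ≤ Real.exp (-(1/2) * ε^2 + (7/3) * ε^3) ∧
    (1/((1-ε^2)*(1+ε))) / Real.exp (1/((1-ε^2)*(1+ε)) - 1)
        ≤ Real.exp (-(1/2) * ε^2 + (7/3) * ε^3) := by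
  have hε1 : ε < 1 := by linarith
  have h1m : (0:ℝ) < 1 - ε := by linarith
  have h34 : (0:ℝ) ≤ 3/4 - ε := by linarith
  -- generic reduction: it suffices to bound log γ
  have main : ∀ γ : ℝ, 0 < γ →
      Real.log γ ≤ γ - 1 + (-(1/2) * ε^2 + (7/3) * ε^3) →
      γ / Real.exp (γ - 1) ≤ Real.exp (-(1/2) * ε^2 + (7/3) * ε^3) := by
    intro γ hγ hlog
    rw [div_le_iff₀ (Real.exp_pos _), ← Real.exp_add]
    calc γ = Real.exp (Real.log γ) := (Real.exp_log hγ).symm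
      _ ≤ _ := Real.exp_le_exp.2 (by linarith)
  -- Taylor bound for -log(1-y), order 3
  have taylor : ∀ y : ℝ, |y| < 1 →
      -Real.log (1 - y) ≤ y + y^2/2 + y^3/3 + |y|^4/(1-|y|) := by
    intro y hy
    have := Real.abs_log_sub_add_sum_range_le hy 3
    simp only [Finset.sum_range_succ, Finset.sum_range_zero] at this
    rw [abs_le] at this
    have h2 := this.1
    push_cast at h2
    nlinarith [h2]
  constructor
  · -- first bound: γ = 1/(1-ε)
    apply main _ (by positivity)
    have hlog : Real.log (1/(1-ε)) = -Real.log (1-ε) := by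
      rw [one_div, Real.log_inv]
    rw [hlog]
    have hT := taylor ε (by rw [abs_of_pos h0]; linarith)
    rw [abs_of_pos h0] at hT
    have key : ε + ε^2/2 + ε^3/3 + ε^4/(1-ε)
        ≤ 1/(1-ε) - 1 + (-(1/2) * ε^2 + (7/3) * ε^3) := by
      rw [← sub_nonneg]
      have hid : 1/(1-ε) - 1 + (-(1/2) * ε^2 + (7/3) * ε^3)
          - (ε + ε^2/2 + ε^3/3 + ε^4/(1-ε)) = 3 * ε^3 := by
        field_simp
        ring
      rw [hid]
      positivity
    linarith
  · -- second bound: γ = 1/((1-ε²)(1+ε)) = 1/(1-x) with x = ε² + ε³ - ε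
    obtain ⟨x, hx⟩ : ∃ x : ℝ, x = ε^2 + ε^3 - ε := ⟨_, rfl⟩
    have hden : (1-ε^2)*(1+ε) = 1 - x := by rw [hx]; ring
    have hxlt : x < 1 := by rw [hx]; nlinarith
    have hxgt : -1 < x := by rw [hx]; nlinarith
    have h1x : (0:ℝ) < 1 - x := by linarith
    have h1px : (0:ℝ) < 1 + x := by linarith
    rw [hden]
    apply main _ (by positivity)
    have hlog : Real.log (1/(1-x)) = -Real.log (1-x) := by
      rw [one_div, Real.log_inv]
    rw [hlog]
    have hT := taylor x (abs_lt.2 ⟨hxgt, hxlt⟩)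
    rcases le_or_gt 0 x with hxs | hxs
    · rw [abs_of_nonneg hxs] at hT
      have key : x + x^2/2 + x^3/3 + x^4/(1-x)
          ≤ 1/(1-x) - 1 + (-(1/2) * ε^2 + (7/3) * ε^3) := by
        rw [← sub_nonneg]
        have hid : 1/(1-x) - 1 + (-(1/2) * ε^2 + (7/3) * ε^3)
            - (x + x^2/2 + x^3/3 + x^4/(1-x))
            = (x^2/2 + x^3/6 - 2/3*x^4
                + (1-x)*(-(1/2) * ε^2 + (7/3) * ε^3))/(1-x) := by
          field_simp
          ring
        rw [hid]
        apply div_nonneg _ (le_of_lt h1x)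
        rw [hx]
        nlinarith [mul_nonneg (pow_nonneg h0.le 3) (pow_nonneg h34 9),
          mul_nonneg (pow_nonneg h0.le 4) (pow_nonneg h34 8),
          mul_nonneg (pow_nonneg h0.le 5) (pow_nonneg h34 7),
          mul_nonneg (pow_nonneg h0.le 6) (pow_nonneg h34 6),
          mul_nonneg (pow_nonneg h0.le 7) (pow_nonneg h34 5),
          mul_nonneg (pow_nonneg h0.le 8) (pow_nonneg h34 4),
          mul_nonneg (pow_nonneg h0.le 9) (pow_nonneg h34 3),
          mul_nonneg (pow_nonneg h0.le 10) (pow_nonneg h34 2),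
          mul_nonneg (pow_nonneg h0.le 11) (pow_nonneg h34 1),
          mul_nonneg (pow_nonneg h0.le 12) (pow_nonneg h34 0)]
      linarith
    · rw [abs_of_neg hxs] at hT
      rw [show (-x)^4 = x^4 by ring, show 1-(-x) = 1+x by ring] at hT
      have key : x + x^2/2 + x^3/3 + x^4/(1+x)
          ≤ 1/(1-x) - 1 + (-(1/2) * ε^2 + (7/3) * ε^3) := by
        rw [← sub_nonneg]
        have hid : 1/(1-x) - 1 + (-(1/2) * ε^2 + (7/3) * ε^3)
            - (x + x^2/2 + x^3/3 + x^4/(1+x))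
            = (x^2/2 + 2/3*x^3 - x^4/2 + 4/3*x^5
                + (1-x^2)*(-(1/2) * ε^2 + (7/3) * ε^3))/((1-x)*(1+x)) := by
          field_simp
          ring
        rw [hid]
        apply div_nonneg _ (by positivity)
        rw [hx]
        nlinarith [mul_nonneg (pow_nonneg h0.le 3) (pow_nonneg h34 12),
          mul_nonneg (pow_nonneg h0.le 4) (pow_nonneg h34 11),
          mul_nonneg (pow_nonneg h0.le 5) (pow_nonneg h34 10),
          mul_nonneg (pow_nonneg h0.le 6) (pow_nonneg h34 9),
          mul_nonneg (pow_nonneg h0.le 7) (pow_nonneg h34 8),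
          mul_nonneg (pow_nonneg h0.le 8) (pow_nonneg h34 7),
          mul_nonneg (pow_nonneg h0.le 9) (pow_nonneg h34 6),
          mul_nonneg (pow_nonneg h0.le 10) (pow_nonneg h34 5),
          mul_nonneg (pow_nonneg h0.le 11) (pow_nonneg h34 4),
          mul_nonneg (pow_nonneg h0.le 12) (pow_nonneg h34 3),
          mul_nonneg (pow_nonneg h0.le 13) (pow_nonneg h34 2),
          mul_nonneg (pow_nonneg h0.le 14) (pow_nonneg h34 1),
          mul_nonneg (pow_nonneg h0.le 15) (pow_nonneg h34 0)]
      linarith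
end

section
/- Let X₁, X₂, ... be i.i.d. Bernoulli(p) random variables with p ∈ (0,1], let A₁, A₂, ... be i.i.d. Exponential(1) random variables independent of the X's, let k ≥ 2 be an integer, and let T = min{n : X₁ + ... + X_n = k}. Then R = A₁ + ... + A_T has the Gamma distribution with shape k and rate p, and consequently p·R/(k-1) ~ Gamma(k, k-1) and the estimator p̂ = (k-1)/R satisfies E[p̂] = p. -/
open MeasureTheory ProbabilityTheory Real

open Set

lemma gbas_pdf_mul {n : ℕ} (hn : 1 ≤ n) (u : ℝ) :
    (fun x => gammaPDF n 1 x * gammaPDF 1 1 (u - x)) =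
      (Icc 0 u).indicator (fun x => ENNReal.ofReal (exp (-u) / Real.Gamma n * x ^ (n-1 : ℕ))) := by
  funext x
  by_cases hx : 0 ≤ x
  · by_cases hxu : x ≤ u
    · rw [indicator_of_mem (mem_Icc.2 ⟨hx, hxu⟩)]
      rw [gammaPDF_of_nonneg hx, gammaPDF_of_nonneg (by linarith : (0:ℝ) ≤ u - x),
        ← ENNReal.ofReal_mul (by positivity)]
      congr 1
      rw [Real.Gamma_one]
      have h1 : ((1:ℝ)-1) = (0:ℝ) := by norm_num
      rw [h1, Real.rpow_zero]
      have h2 : x ^ ((n:ℝ) - 1) = x ^ (n-1 : ℕ) := by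
        rw [← Real.rpow_natCast x (n-1)]
        congr 1
        push_cast [hn]
        ring
      rw [one_rpow, Real.one_rpow]
      rw [h2]
      rw [show -((1:ℝ)*(u-x)) = -(u -x) by ring, show -((1:ℝ)*x) = -x by ring]
      rw [show exp (-x) = exp (-u) * exp (u - x) by rw [← Real.exp_add]; ring_nf]
      have : exp (u - x) * exp (-(u-x)) = 1 := by rw [← Real.exp_add]; simp
      field_simp
      rw [mul_assoc, ← Real.exp_add]
      simp
    · rw [indicator_of_notMem (by simp [mem_Icc, hxu])]
      rw [gammaPDF_of_neg (by linarith : u - x < 0), mul_zero]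
  · rw [indicator_of_notMem (by simp [mem_Icc, hx])]
    rw [gammaPDF_of_neg (lt_of_not_ge hx), zero_mul]

lemma gbas_pdf_conv {n : ℕ} (hn : 1 ≤ n) (u : ℝ) :
    ∫⁻ x, gammaPDF n 1 x * gammaPDF 1 1 (u - x) = gammaPDF (n + 1 : ℕ) 1 u := by
  rw [gbas_pdf_mul hn u, lintegral_indicator measurableSet_Icc]
  by_cases hu : 0 ≤ u
  · have hint : IntegrableOn (fun x : ℝ => exp (-u) / Real.Gamma n * x ^ (n-1 : ℕ)) (Icc 0 u) :=
      (Continuous.continuousOn (by continuity)).integrableOn_Icc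
    rw [← ofReal_integral_eq_lintegral_ofReal hint]
    · have : ∫ x in Icc 0 u, exp (-u) / Real.Gamma n * x ^ (n-1 : ℕ)
          = exp (-u) / Real.Gamma n * (u ^ n / n) := by
        rw [MeasureTheory.integral_Icc_eq_integral_Ioc, ← intervalIntegral.integral_of_le hu,
          intervalIntegral.integral_const_mul, integral_pow]
        have h1 : n - 1 + 1 = n := by omega
        rw [h1]
        have : (0:ℝ) ^ n = 0 := zero_pow (by omega)
        rw [this]
        have : ((n - 1 : ℕ) : ℝ) + 1 = (n : ℝ) := by push_cast [hn]; ring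
        rw [this]
        ring
      rw [this]
      rw [gammaPDF_of_nonneg hu]
      congr 1
      have hΓ : Real.Gamma ((n:ℕ)+1 : ℕ) = n * Real.Gamma n := by
        push_cast
        rw [Real.Gamma_add_one (Nat.cast_ne_zero.2 (by omega))]
      push_cast at hΓ ⊢
      rw [hΓ]
      rw [one_rpow]
      have h2 : u ^ ((n:ℝ) + 1 - 1) = u ^ (n : ℕ) := by
        rw [← Real.rpow_natCast u n]; congr 1; ring
      rw [h2]
      have hn0 : (0:ℝ) < n := Nat.cast_pos.2 (by omega)
      have hΓ0 : (0:ℝ) < Real.Gamma n := Real.Gamma_pos_of_pos hn0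
      field_simp
    · rw [Filter.EventuallyLE, ae_restrict_iff' measurableSet_Icc]
      filter_upwards with x hx
      have hn0 : (0:ℝ) < n := Nat.cast_pos.2 (by omega)
      have hΓ0 : (0:ℝ) < Real.Gamma n := Real.Gamma_pos_of_pos hn0
      have hx0 : (0:ℝ) ≤ x := hx.1
      positivity
  · rw [gammaPDF_of_neg (by push_cast; linarith [lt_of_not_ge hu] : (u:ℝ) < 0)]
    rw [setLIntegral_congr_fun measurableSet_Icc (fun x hx => absurd (le_trans hx.1 hx.2) hu), lintegral_zero]

lemma gbas_measurable_gammaPDF (a r : ℝ) : Measurable (gammaPDF a r) :=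
  (measurable_gammaPDFReal a r).ennreal_ofReal

lemma gbas_map_add {n : ℕ} (hn : 1 ≤ n) :
    Measure.map (fun z : ℝ × ℝ => z.1 + z.2) ((gammaMeasure n 1).prod (gammaMeasure 1 1))
      = gammaMeasure (n + 1 : ℕ) 1 := by
  have hg : Measurable (gammaPDF 1 1) := gbas_measurable_gammaPDF 1 1
  have hf : Measurable (gammaPDF n 1) := gbas_measurable_gammaPDF n 1
  have : IsProbabilityMeasure (gammaMeasure 1 1) := isProbabilityMeasure_gammaMeasure one_pos one_pos
  ext s hs
  rw [Measure.map_apply (by fun_prop) hs]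
  have hps : MeasurableSet ((fun z : ℝ × ℝ => z.1 + z.2) ⁻¹' s) := (by fun_prop : Measurable (fun z : ℝ × ℝ => z.1 + z.2)) hs
  rw [Measure.prod_apply hps]
  have hν : ∀ x : ℝ, (gammaMeasure 1 1) (Prod.mk x ⁻¹' ((fun z : ℝ × ℝ => z.1 + z.2) ⁻¹' s))
      = ∫⁻ u, s.indicator 1 u * gammaPDF 1 1 (u - x) := by
    intro x
    have hmp : MeasurableSet {y : ℝ | x + y ∈ s} := (by fun_prop : Measurable (fun y : ℝ => x + y)) hs
    have : Prod.mk x ⁻¹' ((fun z : ℝ × ℝ => z.1 + z.2) ⁻¹' s) = {y : ℝ | x + y ∈ s} := rfl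
    rw [this, gammaMeasure, withDensity_apply _ hmp, ← lintegral_indicator hmp]
    have h1 : ∀ y : ℝ, ({y : ℝ | x + y ∈ s}).indicator (gammaPDF 1 1) y
        = s.indicator 1 (x + y) * gammaPDF 1 1 y := by
      intro y
      by_cases hy : x + y ∈ s
      · rw [indicator_of_mem (by exact hy), indicator_of_mem hy]; simp
      · rw [indicator_of_notMem (by exact hy), indicator_of_notMem hy]; simp
    simp_rw [h1]
    have := (measurePreserving_sub_right (volume : Measure ℝ) x).lintegral_comp
      (f := fun y => s.indicator 1 (x + y) * gammaPDF 1 1 y)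
      (((measurable_const.indicator hs).comp (by fun_prop)).mul (hg.comp (by fun_prop)))
    rw [← this]
    congr 1
    funext u
    show s.indicator 1 (x + (u - x)) * gammaPDF 1 1 (u - x) = _
    have : x + (u - x) = u := by ring
    rw [this]
  simp_rw [hν]
  rw [gammaMeasure, lintegral_withDensity_eq_lintegral_mul _ hf]
  · have meas2 : Measurable (Function.uncurry fun x u => s.indicator 1 u * gammaPDF 1 1 (u - x) * gammaPDF n 1 x) := by
      apply Measurable.mul
      · apply Measurable.mul
        · exact (measurable_const.indicator hs).comp measurable_snd
        · exact hg.comp (by fun_prop)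
      · exact hf.comp measurable_fst
    have h2 : ∀ x : ℝ, (gammaPDF n 1 * fun x => ∫⁻ u, s.indicator 1 u * gammaPDF 1 1 (u - x)) x
        = ∫⁻ u, s.indicator 1 u * gammaPDF 1 1 (u - x) * gammaPDF n 1 x := by
      intro x
      simp only [Pi.mul_apply]
      rw [mul_comm, lintegral_mul_const]
      exact ((measurable_const.indicator hs)).mul (hg.comp (by fun_prop))
    simp_rw [h2]
    rw [lintegral_lintegral_swap meas2.aemeasurable]
    have h3 : ∀ u : ℝ, ∫⁻ x, s.indicator 1 u * gammaPDF 1 1 (u - x) * gammaPDF n 1 x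
        = s.indicator 1 u * gammaPDF (n+1:ℕ) 1 u := by
      intro u
      rw [← gbas_pdf_conv hn u]
      rw [← lintegral_const_mul]
      · congr 1; funext x; ring
      · exact (hf.mul (hg.comp (by fun_prop)))
    simp_rw [h3]
    rw [gammaMeasure, withDensity_apply _ hs, ← lintegral_indicator hs]
    congr 1
    funext u
    by_cases hu : u ∈ s
    · rw [indicator_of_mem hu, indicator_of_mem hu]; simp
    · rw [indicator_of_notMem hu, indicator_of_notMem hu]; simp
  · apply Measurable.lintegral_prod_right (f := fun x u => s.indicator 1 u * gammaPDF 1 1 (u - x))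
    apply Measurable.mul
    · exact (measurable_const.indicator hs).comp measurable_snd
    · exact hg.comp (by fun_prop)

lemma gbas_pdf_scale {a r c : ℝ} (hr : 0 < r) (hc : 0 < c) (u : ℝ) :
    ENNReal.ofReal c⁻¹ * gammaPDF a r (u / c) = gammaPDF a (r / c) u := by
  by_cases hu : 0 ≤ u
  · have huc : 0 ≤ u / c := by positivity
    rw [gammaPDF_of_nonneg huc, gammaPDF_of_nonneg hu, ← ENNReal.ofReal_mul (by positivity)]
    congr 1
    have h2 : (u / c) ^ (a-1) = u ^ (a-1) / c ^ (a-1) := Real.div_rpow hu hc.le _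
    have h3 : (r / c) ^ a = r ^ a / c ^ a := Real.div_rpow hr.le hc.le _
    have h4 : c ^ a = c ^ (a-1) * c := by
      rw [← Real.rpow_add_one hc.ne' (a-1)]; ring_nf
    have h5 : r * (u / c) = r / c * u := by field_simp
    rw [h2, h3, h4, h5]
    have hca : 0 < c ^ (a-1) := Real.rpow_pos_of_pos hc _
    field_simp
  · have h1 : u / c < 0 := div_neg_of_neg_of_pos (lt_of_not_ge hu) hc
    rw [gammaPDF_of_neg h1, gammaPDF_of_neg (lt_of_not_ge hu), mul_zero]

lemma gbas_map_scale {a r c : ℝ} (hr : 0 < r) (hc : 0 < c) :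
    Measure.map (fun x : ℝ => c * x) (gammaMeasure a r) = gammaMeasure a (r / c) := by
  have hpdf : Measurable (gammaPDF a r) := gbas_measurable_gammaPDF a r
  ext s hs
  have hpre : MeasurableSet ((fun x : ℝ => c * x) ⁻¹' s) := (measurable_const_mul c) hs
  rw [Measure.map_apply (measurable_const_mul c) hs, gammaMeasure, withDensity_apply _ hpre,
    ← lintegral_indicator hpre]
  have key : ∀ x : ℝ, ((fun x : ℝ => c * x) ⁻¹' s).indicator (gammaPDF a r) x
      = (fun u => s.indicator 1 u * gammaPDF a r (u / c)) (c * x) := by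
    intro x
    have hcx : c * x / c = x := by field_simp
    by_cases hx : c * x ∈ s
    · rw [indicator_of_mem (by exact hx)]
      show _ = s.indicator 1 (c*x) * gammaPDF a r (c * x / c)
      rw [indicator_of_mem hx, hcx]; simp
    · rw [indicator_of_notMem (by exact hx)]
      show _ = s.indicator 1 (c*x) * gammaPDF a r (c * x / c)
      rw [indicator_of_notMem hx]; simp
  simp_rw [key]
  have hH : Measurable (fun u : ℝ => s.indicator 1 u * gammaPDF a r (u / c)) :=
    (measurable_const.indicator hs).mul (hpdf.comp (by fun_prop))
  have hmap : ∫⁻ x, (fun u => s.indicator 1 u * gammaPDF a r (u / c)) (c * x)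
      = ∫⁻ u, (fun u => s.indicator 1 u * gammaPDF a r (u / c)) u ∂(Measure.map (fun x : ℝ => c * x) volume) :=
    (lintegral_map hH (measurable_const_mul c)).symm
  rw [hmap, Real.map_volume_mul_left hc.ne', lintegral_smul_measure]
  have habs : |c⁻¹| = c⁻¹ := abs_of_pos (by positivity)
  rw [habs, smul_eq_mul, ← lintegral_const_mul _ hH]
  have key2 : ∀ u : ℝ, ENNReal.ofReal c⁻¹ * (s.indicator 1 u * gammaPDF a r (u / c))
      = s.indicator (gammaPDF a (r / c)) u := by
    intro u
    by_cases hu : u ∈ s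
    · rw [indicator_of_mem hu, indicator_of_mem hu, Pi.one_apply, one_mul, ← gbas_pdf_scale hr hc]
    · rw [indicator_of_notMem hu, indicator_of_notMem hu]; simp
  simp_rw [key2]
  rw [lintegral_indicator hs, gammaMeasure, withDensity_apply _ hs]

lemma gbas_real_summable {p : ℝ} (hp0 : 0 < p) (hp1 : p ≤ 1) {k : ℕ} (hk : 1 ≤ k) :
    Summable (fun m : ℕ => ((m + (k-1)).choose (k-1) : ℝ) * (p^k * (1-p)^m)) := by
  have hq : ‖1 - p‖ < 1 := by rw [Real.norm_eq_abs, abs_lt]; constructor <;> linarith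
  have := (summable_choose_mul_geometric_of_norm_lt_one (k-1) hq).mul_left (p^k)
  apply this.congr
  intro m; ring

lemma gbas_coeff_tsum {p : ℝ} (hp0 : 0 < p) (hp1 : p ≤ 1) {k : ℕ} (hk : 1 ≤ k) :
    ∑' m : ℕ, (((m + (k-1)).choose (k-1) : ℝ) * (p^k * (1-p)^m)) = 1 := by
  have hq : ‖1 - p‖ < 1 := by rw [Real.norm_eq_abs, abs_lt]; constructor <;> linarith
  have h1 : ∑' m : ℕ, (((m + (k-1)).choose (k-1) : ℝ) * (1-p)^m) = 1 / (1 - (1-p)) ^ ((k-1) + 1) :=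
    tsum_choose_mul_geometric_of_norm_lt_one (k-1) hq
  have h2 : ∀ m : ℕ, (((m + (k-1)).choose (k-1) : ℝ) * (p^k * (1-p)^m))
      = p^k * (((m + (k-1)).choose (k-1) : ℝ) * (1-p)^m) := fun m => by ring
  rw [tsum_congr h2, tsum_mul_left, h1]
  have : 1 - (1 - p) = p := by ring
  rw [this]
  have : k - 1 + 1 = k := by omega
  rw [this]
  field_simp

lemma gbas_coeff_sum_one {p : ℝ} (hp0 : 0 < p) (hp1 : p ≤ 1) {k : ℕ} (hk : 1 ≤ k) :
    ∑' m : ℕ, ENNReal.ofReal (((m + (k-1)).choose (k-1) : ℝ) * (p^k * (1-p)^m)) = 1 := by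
  rw [← ENNReal.ofReal_tsum_of_nonneg (fun m => by
      have hq : (0:ℝ) ≤ 1 - p := by linarith
      positivity) (gbas_real_summable hp0 hp1 hk),
    gbas_coeff_tsum hp0 hp1 hk, ENNReal.ofReal_one]

lemma gbas_series {p : ℝ} (hp0 : 0 < p) (hp1 : p ≤ 1) {k : ℕ} (hk : 2 ≤ k) (x : ℝ) :
    ∑' m : ℕ, ENNReal.ofReal (((m + (k-1)).choose (k-1) : ℝ) * (p^k * (1-p)^m))
        * gammaPDF ((m + k : ℕ)) 1 x = gammaPDF k p x := by
  have hq : (0:ℝ) ≤ 1 - p := by linarith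
  by_cases hx : 0 ≤ x
  · have hpdfm : ∀ m : ℕ, gammaPDF ((m + k : ℕ)) 1 x
        = ENNReal.ofReal (x ^ (m + k - 1 : ℕ) * exp (-x) / (m + k - 1).factorial) := by
      intro m
      rw [gammaPDF_of_nonneg hx]
      congr 1
      rw [one_rpow]
      have hΓ : Real.Gamma ((m + k : ℕ) : ℝ) = ((m + k - 1).factorial : ℝ) := by
        have h0 : ((m + k : ℕ) : ℝ) = ((m + k - 1 : ℕ) : ℝ) + 1 := by
          push_cast [show (1:ℕ) ≤ m + k by omega]; ring
        rw [h0, Real.Gamma_nat_eq_factorial]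
      have hxp : x ^ (((m + k : ℕ) : ℝ) - 1) = x ^ (m + k - 1 : ℕ) := by
        rw [← Real.rpow_natCast x (m + k - 1)]
        congr 1
        push_cast [show (1:ℕ) ≤ m + k by omega]
        ring
      rw [hΓ, hxp]
      have : -((1:ℝ) * x) = -x := by ring
      rw [this]
      ring
    have hcomb : ∀ m : ℕ, ENNReal.ofReal (((m + (k-1)).choose (k-1) : ℝ) * (p^k * (1-p)^m))
        * ENNReal.ofReal (x ^ (m + k - 1 : ℕ) * exp (-x) / (m + k - 1).factorial)
        = ENNReal.ofReal ((((m + (k-1)).choose (k-1) : ℝ) * (p^k * (1-p)^m))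
            * (x ^ (m + k - 1 : ℕ) * exp (-x) / (m + k - 1).factorial)) := by
      intro m
      rw [← ENNReal.ofReal_mul (by positivity)]
    simp_rw [hpdfm, hcomb]
    have hkey : ∀ m : ℕ, ((m + (k-1)).choose (k-1) : ℝ) * (p^k * (1-p)^m)
        * (x ^ (m + k - 1 : ℕ) * exp (-x) / (m + k - 1).factorial)
        = (p^k * x^(k-1:ℕ) * exp (-x) / (k-1).factorial) * (((1-p)*x)^m / m.factorial) := by
      intro m
      have hc : ((m + (k-1)).choose (k-1) : ℝ) * (m.factorial : ℝ) * ((k-1).factorial : ℝ)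
          = ((m + k - 1).factorial : ℝ) := by
        have h := Nat.add_choose_mul_factorial_mul_factorial m (k-1)
        have h2 : (m + (k-1)).choose (k-1) = (m + k - 1).choose (k-1) := by
          congr 1; omega
        rw [h2] at *
        rw [show m + (k-1) = m + k - 1 by omega] at h
        exact_mod_cast congrArg (fun t : ℕ => (t : ℝ)) h
      have hpow : x ^ (m + k - 1 : ℕ) = x ^ (k-1:ℕ) * x ^ m := by
        rw [← pow_add]; congr 1; omega
      have hmp : ((1-p)*x)^m = (1-p)^m * x^m := mul_pow _ _ _
      have hCpos : 0 < ((m + (k-1)).choose (k-1)) := Nat.choose_pos (by omega)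
      have hC0 : (((m + (k-1)).choose (k-1) : ℕ) : ℝ) ≠ 0 := Nat.cast_ne_zero.2 hCpos.ne'
      have hf1 : ((k-1).factorial : ℝ) ≠ 0 := Nat.cast_ne_zero.2 (Nat.factorial_ne_zero _)
      have hf2 : ((m.factorial : ℕ) : ℝ) ≠ 0 := Nat.cast_ne_zero.2 (Nat.factorial_ne_zero _)
      rw [hpow, hmp, ← hc]
      field_simp
    simp_rw [hkey]
    have hsum : Summable (fun m : ℕ => ((1-p)*x)^m / (m.factorial : ℝ)) :=
      Real.summable_pow_div_factorial _
    rw [← ENNReal.ofReal_tsum_of_nonneg (fun m => by positivity) (hsum.mul_left _)]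
    rw [tsum_mul_left]
    have hexp : ∑' m : ℕ, ((1-p)*x)^m / (m.factorial : ℝ) = exp ((1-p)*x) := by
      rw [Real.exp_eq_exp_ℝ, NormedSpace.exp_eq_tsum_div]
    rw [hexp, gammaPDF_of_nonneg hx]
    congr 1
    have hΓk : Real.Gamma (k : ℝ) = ((k-1).factorial : ℝ) := by
      have h0 : ((k : ℕ) : ℝ) = ((k - 1 : ℕ) : ℝ) + 1 := by
        push_cast [show (1:ℕ) ≤ k by omega]; ring
      rw [h0, Real.Gamma_nat_eq_factorial]
    have hpk : p ^ (k : ℝ) = p ^ (k : ℕ) := Real.rpow_natCast p k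
    have hxk : x ^ ((k : ℝ) - 1) = x ^ (k-1:ℕ) := by
      rw [← Real.rpow_natCast x (k-1)]
      congr 1
      push_cast [show (1:ℕ) ≤ k by omega]
      ring
    rw [hΓk, hpk, hxk]
    have hee : exp (-x) * exp ((1-p)*x) = exp (-(p*x)) := by
      rw [← Real.exp_add]; ring_nf
    have hf1 : ((k-1).factorial : ℝ) ≠ 0 := Nat.cast_ne_zero.2 (Nat.factorial_ne_zero _)
    field_simp
    have hee2 : exp (-x) * exp (x*(1-p)) = exp (-(x*p)) := by
      rw [← Real.exp_add]; ring_nf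
    linear_combination (x^(k-1:ℕ)) * hee2
  · have h0 : ∀ m : ℕ, ENNReal.ofReal (((m + (k-1)).choose (k-1) : ℝ) * (p^k * (1-p)^m))
        * gammaPDF ((m + k : ℕ)) 1 x = 0 := by
      intro m
      rw [gammaPDF_of_neg (lt_of_not_ge hx), mul_zero]
    simp_rw [h0, tsum_zero]
    rw [gammaPDF_of_neg (lt_of_not_ge hx)]

lemma gbas_precomp {ι κ : Type*} {Ω : Type*} [MeasurableSpace Ω] {μ : Measure Ω}
    {β : Type*} {mβ : MeasurableSpace β} {f : ι → Ω → β} (u : κ ↪ ι)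
    (h : iIndepFun f μ) :
    iIndepFun (fun j => f (u j)) μ := by
  classical
  rw [iIndepFun_iff_measure_inter_preimage_eq_mul] at h ⊢
  intro S sets h_meas
  set sets' : ι → Set β := fun i => ⋂ j ∈ S.filter (fun j => u j = i), sets j with hsets'
  have hmeas' : ∀ i ∈ S.map u, MeasurableSet (sets' i) := by
    intro i hi
    apply MeasurableSet.biInter (Finset.countable_toSet _)
    intro j hj
    simp only [Finset.coe_filter, Set.mem_setOf_eq] at hj
    exact h_meas j hj.1
  have hs' : ∀ j ∈ S, sets' (u j) = sets j := by
    intro j hj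
    have : S.filter (fun j' => u j' = u j) = {j} := by
      ext j'
      simp only [Finset.mem_filter, Finset.mem_singleton]
      constructor
      · rintro ⟨_, h2⟩; exact u.injective h2
      · rintro rfl; exact ⟨hj, rfl⟩
    show (⋂ j' ∈ Finset.filter (fun j' => u j' = u j) S, sets j') = sets j
    rw [this]
    simp
  have := h (S.map u) hmeas'
  rw [Finset.prod_map] at this
  have hI : (⋂ i ∈ S.map u, f i ⁻¹' sets' i) = ⋂ j ∈ S, (fun ω => f (u j) ω) ⁻¹' sets j := by
    ext ω
    simp only [Set.mem_iInter, Finset.mem_map]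
    constructor
    · intro hω j hj
      have := hω (u j) ⟨j, hj, rfl⟩
      rwa [hs' j hj] at this
    · rintro hω i ⟨j, hj, rfl⟩
      rw [hs' j hj]
      exact hω j hj
  rw [hI] at this
  rw [this]
  apply Finset.prod_congr rfl
  intro j hj
  rw [hs' j hj]

lemma gbas_map_sum_exp {Ω : Type*} [MeasurableSpace Ω] (P : Measure Ω) [IsProbabilityMeasure P]
    (A : ℕ → Ω → ℝ) (hAmeas : ∀ n, Measurable (A n))
    (hAdist : ∀ n, Measure.map (A n) P = expMeasure 1)
    (hAindep : iIndepFun A P) :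
    ∀ n : ℕ, 1 ≤ n →
      Measure.map (fun ω => ∑ i ∈ Finset.range n, A i ω) P = gammaMeasure n 1 := by
  intro n
  induction n with
  | zero => intro h; omega
  | succ n ih =>
    intro _
    by_cases hn : 1 ≤ n
    · have hSA : Measurable (fun ω => ∑ i ∈ Finset.range n, A i ω) := by
        apply Finset.measurable_sum
        intro i _
        exact hAmeas i
      have hind : IndepFun (fun ω => ∑ i ∈ Finset.range n, A i ω) (A n) P := by
        have := hAindep.indepFun_sum_range_succ hAmeas n
        have heq : (∑ j ∈ Finset.range n, A j) = fun ω => ∑ i ∈ Finset.range n, A i ω := by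
          funext ω; simp [Finset.sum_apply]
        rwa [heq] at this
      have hprod := (indepFun_iff_map_prod_eq_prod_map_map hSA.aemeasurable
        (hAmeas n).aemeasurable).mp hind
      have hcomp : (fun ω => ∑ i ∈ Finset.range (n+1), A i ω)
          = (fun z : ℝ × ℝ => z.1 + z.2) ∘ (fun ω => (∑ i ∈ Finset.range n, A i ω, A n ω)) := by
        funext ω
        simp [Finset.sum_range_succ]
      rw [hcomp, ← Measure.map_map measurable_add (hSA.prodMk (hAmeas n)), hprod,
        ih hn, hAdist n]
      have : expMeasure 1 = gammaMeasure 1 1 := rfl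
      rw [this, gbas_map_add hn]
    · have hn0 : n = 0 := by omega
      subst hn0
      have heq : (fun ω => ∑ i ∈ Finset.range 1, A i ω) = A 0 := by
        funext ω; simp
      rw [heq, hAdist 0]
      have : ((1:ℕ):ℝ) = (1:ℝ) := by norm_num
      rw [this]
      rfl

section gbasProb

variable {Ω : Type*} [MeasurableSpace Ω] {P : Measure Ω} [IsProbabilityMeasure P]
  {p : ℝ} {k : ℕ} {X : ℕ → Ω → ℕ} {T : Ω → ℕ}

lemma gbas_T_eq_iff (hT : ∀ ω, T ω = sInf {n | ∑ i ∈ Finset.range n, X i ω = k})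
    (ω : Ω) (m : ℕ) :
    T ω = m + 1 ↔ (∑ i ∈ Finset.range (m+1), X i ω = k ∧ ∑ i ∈ Finset.range m, X i ω ≠ k) := by
  have hmono : ∀ a b : ℕ, a ≤ b → (∑ i ∈ Finset.range a, X i ω) ≤ ∑ i ∈ Finset.range b, X i ω :=
    fun a b hab => Finset.sum_le_sum_of_subset (Finset.range_subset_range.mpr hab)
  rw [hT ω]
  constructor
  · intro h
    have hne : {n | ∑ i ∈ Finset.range n, X i ω = k}.Nonempty := by
      by_contra hc
      rw [Set.not_nonempty_iff_eq_empty] at hc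
      rw [hc, Nat.sInf_empty] at h
      omega
    have h1 := Nat.sInf_mem hne
    rw [h] at h1
    have h2 : m ∉ {n | ∑ i ∈ Finset.range n, X i ω = k} := Nat.notMem_of_lt_sInf (by omega)
    exact ⟨h1, h2⟩
  · rintro ⟨h1, h2⟩
    have hne : {n | ∑ i ∈ Finset.range n, X i ω = k}.Nonempty := ⟨m+1, h1⟩
    have hle : sInf {n | ∑ i ∈ Finset.range n, X i ω = k} ≤ m + 1 := Nat.sInf_le h1
    rcases Nat.lt_or_ge (sInf {n | ∑ i ∈ Finset.range n, X i ω = k}) (m+1) with hlt | hge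
    · exfalso
      have hmem := Nat.sInf_mem hne
      have ha : (∑ i ∈ Finset.range (sInf {n | ∑ i ∈ Finset.range n, X i ω = k}), X i ω) ≤
          ∑ i ∈ Finset.range m, X i ω := hmono _ _ (by omega)
      rw [hmem] at ha
      have hb : (∑ i ∈ Finset.range m, X i ω) ≤ ∑ i ∈ Finset.range (m+1), X i ω :=
        hmono m (m+1) (by omega)
      rw [h1] at hb
      omega
    · omega

lemma gbas_T_meas (hT : ∀ ω, T ω = sInf {n | ∑ i ∈ Finset.range n, X i ω = k})
    (hXmeas : ∀ n, Measurable (X n)) : Measurable T := by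
  have hS : ∀ m : ℕ, Measurable (fun ω => ∑ i ∈ Finset.range m, X i ω) := by
    intro m
    exact Finset.measurable_sum _ (fun i _ => hXmeas i)
  have hTn : ∀ m : ℕ, MeasurableSet (T ⁻¹' {m + 1}) := by
    intro m
    have : T ⁻¹' {m+1} = {ω | ∑ i ∈ Finset.range (m+1), X i ω = k}
        ∩ {ω | ∑ i ∈ Finset.range m, X i ω = k}ᶜ := by
      ext ω
      simp only [Set.mem_preimage, Set.mem_singleton_iff, Set.mem_inter_iff, Set.mem_compl_iff,
        Set.mem_setOf_eq]
      exact gbas_T_eq_iff hT ω m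
    rw [this]
    exact ((hS (m+1) (by exact MeasurableSet.singleton k))).inter
      ((hS m (by exact MeasurableSet.singleton k))).compl
  apply measurable_to_countable'
  intro n
  cases n with
  | zero =>
    have : T ⁻¹' {0} = (⋃ m : ℕ, T ⁻¹' {m + 1})ᶜ := by
      ext ω
      simp only [Set.mem_preimage, Set.mem_singleton_iff, Set.mem_compl_iff, Set.mem_iUnion]
      constructor
      · intro h hc
        rcases hc with ⟨m, hm⟩
        omega
      · intro h
        rcases Nat.eq_zero_or_pos (T ω) with h0 | h0
        · exact h0
        · exact absurd ⟨T ω - 1, by omega⟩ h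
    rw [this]
    exact (MeasurableSet.iUnion hTn).compl
  | succ m => exact hTn m

end gbasProb

section gbasProb2

variable {Ω : Type*} [MeasurableSpace Ω] {P : Measure Ω} [IsProbabilityMeasure P]
  {p : ℝ} {k : ℕ} {X : ℕ → Ω → ℕ} {T : Ω → ℕ}

lemma gbas_pattern (hp0 : 0 < p) (hp1 : p ≤ 1)
    (hX1 : ∀ n, P {ω | X n ω = 1} = ENNReal.ofReal p)
    (hX0 : ∀ n, P {ω | X n ω = 0} = ENNReal.ofReal (1 - p))
    (hYindep : iIndepFun
      (fun n ω => ((X n ω : ℝ))) P)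
    (n : ℕ) (F : Finset ℕ) (hF : F ⊆ Finset.range n) :
    P (⋂ i ∈ Finset.range n, {ω | X i ω = (if i ∈ F then 1 else 0)})
      = ENNReal.ofReal p ^ F.card * ENNReal.ofReal (1-p) ^ (n - F.card) := by
  classical
  rw [iIndepFun_iff_measure_inter_preimage_eq_mul] at hYindep
  have h := hYindep (Finset.range n)
    (sets := fun i => {(if i ∈ F then (1:ℝ) else 0)})
    (fun i _ => MeasurableSet.singleton _)
  have hsets : ∀ i, (fun ω => ((X i ω : ℝ))) ⁻¹' {(if i ∈ F then (1:ℝ) else 0)}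
      = {ω | X i ω = (if i ∈ F then 1 else 0)} := by
    intro i
    ext ω
    by_cases hi : i ∈ F <;> simp [hi, Set.mem_preimage, Nat.cast_eq_one, Nat.cast_eq_zero]
  simp_rw [hsets] at h
  rw [h]
  have hPi : ∀ i, P {ω | X i ω = (if i ∈ F then 1 else 0)}
      = (if i ∈ F then ENNReal.ofReal p else ENNReal.ofReal (1-p)) := by
    intro i
    by_cases hi : i ∈ F <;> simp [hi, hX1 i, hX0 i]
  simp_rw [hPi]
  rw [Finset.prod_ite, Finset.prod_const, Finset.prod_const]
  congr 2
  · rw [Finset.filter_mem_eq_inter, Finset.inter_eq_right.mpr hF]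
  · have : Finset.filter (fun i => i ∉ F) (Finset.range n) = Finset.range n \ F := by
      ext i; simp [Finset.mem_sdiff]
    rw [this, Finset.card_sdiff_of_subset hF, Finset.card_range]

lemma gbas_T_dist (hp0 : 0 < p) (hp1 : p ≤ 1) (hk : 2 ≤ k)
    (hXmeas : ∀ n, Measurable (X n))
    (hX1 : ∀ n, P {ω | X n ω = 1} = ENNReal.ofReal p)
    (hX0 : ∀ n, P {ω | X n ω = 0} = ENNReal.ofReal (1 - p))
    (hYindep : iIndepFun
      (fun n ω => ((X n ω : ℝ))) P)
    (hT : ∀ ω, T ω = sInf {n | ∑ i ∈ Finset.range n, X i ω = k})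
    (m : ℕ) :
    P {ω | T ω = m + 1}
      = ENNReal.ofReal ((m.choose (k-1) : ℝ) * (p^k * (1-p)^(m - (k-1)))) := by
  classical
  -- each X i is a.s. in {0,1}
  have hbin : ∀ i : ℕ, P {ω | ¬ X i ω ≤ 1} = 0 := by
    intro i
    have hdisj : Disjoint {ω | X i ω = 0} {ω | X i ω = 1} := by
      rw [Set.disjoint_iff_forall_ne]
      rintro ω h1 ω' h2 rfl
      simp only [Set.mem_setOf_eq] at h1 h2
      omega
    have hu : P ({ω | X i ω = 0} ∪ {ω | X i ω = 1}) = 1 := by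
      rw [measure_union hdisj ((hXmeas i) (MeasurableSet.singleton 1)), hX0 i, hX1 i,
        ← ENNReal.ofReal_add (by linarith) (by linarith)]
      norm_num
    have hms : MeasurableSet ({ω | X i ω = 0} ∪ {ω | X i ω = 1}) :=
      ((hXmeas i) (MeasurableSet.singleton 0)).union ((hXmeas i) (MeasurableSet.singleton 1))
    have hc : P (({ω | X i ω = 0} ∪ {ω | X i ω = 1})ᶜ) = 0 := by
      rw [measure_compl hms (measure_ne_top _ _), hu, measure_univ]
      simp
    apply measure_mono_null _ hc
    intro ω hω
    simp only [Set.mem_setOf_eq] at hω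
    simp only [Set.mem_compl_iff, Set.mem_union, Set.mem_setOf_eq]
    omega
  set G : Set Ω := {ω | ∀ i ∈ Finset.range (m+1), X i ω ≤ 1} with hG
  have hGmeas : MeasurableSet G := by
    have : G = ⋂ i ∈ Finset.range (m+1), {ω | X i ω ≤ 1} := by
      ext ω; simp [hG]
    rw [this]
    exact MeasurableSet.biInter (Finset.countable_toSet _)
      (fun i _ => (hXmeas i) (measurableSet_Iic (a := 1)))
  have hGc : P Gᶜ = 0 := by
    have hsub : Gᶜ ⊆ ⋃ i ∈ Finset.range (m+1), {ω | ¬ X i ω ≤ 1} := by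
      intro ω hω
      simp only [hG, Set.mem_compl_iff, Set.mem_setOf_eq, not_forall] at hω
      rcases hω with ⟨i, hi, hgt⟩
      exact Set.mem_biUnion hi hgt
    apply measure_mono_null hsub
    exact (measure_biUnion_null_iff (Finset.countable_toSet _)).mpr (fun i _ => hbin i)
  -- reduce to intersection with G
  have hsplit : P {ω | T ω = m + 1} = P ({ω | T ω = m + 1} ∩ G) := by
    rw [← measure_inter_add_diff {ω | T ω = m + 1} hGmeas]
    have : P ({ω | T ω = m + 1} \ G) = 0 :=
      measure_mono_null (fun ω hω => hω.2) hGc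
    rw [this, add_zero]
  -- the decomposition
  have hdecomp : {ω | T ω = m + 1} ∩ G
      = ⋃ F ∈ Finset.powersetCard (k-1) (Finset.range m),
          ⋂ i ∈ Finset.range (m+1), {ω | X i ω = (if i ∈ insert m F then 1 else 0)} := by
    ext ω
    simp only [Set.mem_inter_iff, Set.mem_setOf_eq, Set.mem_iUnion, Set.mem_iInter, hG]
    constructor
    · rintro ⟨hTm, hB⟩
      rw [gbas_T_eq_iff hT ω m] at hTm
      obtain ⟨h1, h2⟩ := hTm
      have hsum : (∑ i ∈ Finset.range m, X i ω) + X m ω = k := by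
        rw [← Finset.sum_range_succ]; exact h1
      have hXm1 : X m ω = 1 := by
        have := hB m (Finset.self_mem_range_succ m)
        omega
      have hSm : (∑ i ∈ Finset.range m, X i ω) = k - 1 := by omega
      refine ⟨(Finset.range m).filter (fun j => X j ω = 1), ?_, ?_⟩
      · rw [Finset.mem_powersetCard]
        refine ⟨Finset.filter_subset _ _, ?_⟩
        have hcard : (∑ i ∈ Finset.range m, X i ω)
            = ((Finset.range m).filter (fun j => X j ω = 1)).card := by
          rw [← Finset.sum_filter_add_sum_filter_not (Finset.range m) (fun j => X j ω = 1)]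
          have e1 : (∑ i ∈ (Finset.range m).filter (fun j => X j ω = 1), X i ω)
              = ((Finset.range m).filter (fun j => X j ω = 1)).card := by
            rw [Finset.sum_congr rfl (fun i hi => (Finset.mem_filter.mp hi).2)]
            simp
          have e2 : (∑ i ∈ (Finset.range m).filter (fun j => ¬ X j ω = 1), X i ω) = 0 := by
            apply Finset.sum_eq_zero
            intro i hi
            have h3 := (Finset.mem_filter.mp hi).2
            have h4 := hB i (Finset.mem_range_succ_iff.mpr
              (le_of_lt (Finset.mem_range.mp (Finset.mem_filter.mp hi).1)))
            omega
          rw [e1, e2, add_zero]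
        omega
      · intro i hi
        rcases Nat.lt_or_ge i m with him | him
        · by_cases hXi : X i ω = 1
          · have hiF : i ∈ (Finset.range m).filter (fun j => X j ω = 1) :=
              Finset.mem_filter.mpr ⟨Finset.mem_range.mpr him, hXi⟩
            rw [if_pos (Finset.mem_insert.mpr (Or.inr hiF))]
            exact hXi
          · rw [if_neg]
            · have := hB i hi; omega
            · intro hmem
              rcases Finset.mem_insert.mp hmem with h' | h'
              · omega
              · exact hXi (Finset.mem_filter.mp h').2
        · have : i = m := by
            have := Finset.mem_range.mp hi; omega
          subst this
          rw [if_pos (Finset.mem_insert_self _ _)]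
          exact hXm1
    · rintro ⟨F, hF, hpat⟩
      rw [Finset.mem_powersetCard] at hF
      obtain ⟨hFsub, hFcard⟩ := hF
      have hmnotF : m ∉ F := fun h => absurd (Finset.mem_range.mp (hFsub h)) (lt_irrefl m)
      have hJsub : insert m F ⊆ Finset.range (m+1) := by
        intro i hi
        rcases Finset.mem_insert.mp hi with h' | h'
        · rw [h']; exact Finset.self_mem_range_succ m
        · exact Finset.mem_range_succ_iff.mpr (le_of_lt (Finset.mem_range.mp (hFsub h')))
      have hsum1 : (∑ i ∈ Finset.range (m+1), X i ω) = k := by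
        rw [Finset.sum_congr rfl hpat, Finset.sum_ite_mem,
          Finset.inter_eq_right.mpr hJsub]
        simp only [Finset.sum_const, smul_eq_mul, mul_one]
        rw [Finset.card_insert_of_notMem hmnotF, hFcard]
        omega
      have hsum2 : (∑ i ∈ Finset.range m, X i ω) = k - 1 := by
        have hpat' : ∀ i ∈ Finset.range m, X i ω = (if i ∈ insert m F then 1 else 0) :=
          fun i hi => hpat i (Finset.mem_range_succ_iff.mpr (le_of_lt (Finset.mem_range.mp hi)))
        rw [Finset.sum_congr rfl hpat', Finset.sum_ite_mem]
        have : Finset.range m ∩ insert m F = F := by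
          ext i
          simp only [Finset.mem_inter, Finset.mem_insert, Finset.mem_range]
          constructor
          · rintro ⟨h1', h2' | h2'⟩
            · omega
            · exact h2'
          · intro hiF
            exact ⟨Finset.mem_range.mp (hFsub hiF), Or.inr hiF⟩
        rw [this]
        simp [hFcard]
      constructor
      · rw [gbas_T_eq_iff hT ω m]
        constructor
        · exact hsum1
        · omega
      · intro i hi
        rw [hpat i hi]
        split_ifs <;> omega
  rw [hsplit, hdecomp]
  have hmeaspat : ∀ F : Finset ℕ, MeasurableSet
      (⋂ i ∈ Finset.range (m+1), {ω | X i ω = (if i ∈ insert m F then 1 else 0)}) := by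
    intro F
    exact MeasurableSet.biInter (Finset.countable_toSet _)
      (fun i _ => (hXmeas i) (MeasurableSet.singleton _))
  have hdisjpat : Set.Pairwise ((Finset.powersetCard (k-1) (Finset.range m) : Finset (Finset ℕ)) : Set (Finset ℕ))
      (Function.onFun Disjoint (fun F =>
        ⋂ i ∈ Finset.range (m+1), {ω | X i ω = (if i ∈ insert m F then 1 else 0)})) := by
    intro F hF F' hF' hne
    rw [Finset.mem_coe, Finset.mem_powersetCard] at hF hF'
    rw [Function.onFun, Set.disjoint_iff_forall_ne]
    rintro ω h1 ω' h2 rfl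
    apply hne
    have hex : ∀ i : ℕ, i ∈ F ↔ i ∈ F' := by
      intro i
      by_cases hiF : i ∈ F <;> by_cases hiF' : i ∈ F'
      · simp [hiF, hiF']
      · exfalso
        have him : i ∈ Finset.range (m+1) := by
          have := Finset.mem_range.mp (hF.1 hiF); exact Finset.mem_range.mpr (by omega)
        have e1 := Set.mem_iInter.mp (Set.mem_iInter.mp h1 i) him
        have e2 := Set.mem_iInter.mp (Set.mem_iInter.mp h2 i) him
        simp only [Set.mem_setOf_eq] at e1 e2
        rw [if_pos (Finset.mem_insert.mpr (Or.inr hiF))] at e1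
        rw [if_neg] at e2
        · omega
        · intro hmem
          rcases Finset.mem_insert.mp hmem with h' | h'
          · have := Finset.mem_range.mp (hF.1 hiF); omega
          · exact hiF' h'
      · exfalso
        have him : i ∈ Finset.range (m+1) := by
          have := Finset.mem_range.mp (hF'.1 hiF'); exact Finset.mem_range.mpr (by omega)
        have e1 := Set.mem_iInter.mp (Set.mem_iInter.mp h1 i) him
        have e2 := Set.mem_iInter.mp (Set.mem_iInter.mp h2 i) him
        simp only [Set.mem_setOf_eq] at e1 e2
        rw [if_pos (Finset.mem_insert.mpr (Or.inr hiF'))] at e2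
        rw [if_neg] at e1
        · omega
        · intro hmem
          rcases Finset.mem_insert.mp hmem with h' | h'
          · have := Finset.mem_range.mp (hF'.1 hiF'); omega
          · exact hiF h'
      · simp [hiF, hiF']
    exact Finset.ext hex
  rw [measure_biUnion_finset hdisjpat (fun F _ => hmeaspat F)]
  have hterm : ∀ F ∈ Finset.powersetCard (k-1) (Finset.range m),
      P (⋂ i ∈ Finset.range (m+1), {ω | X i ω = (if i ∈ insert m F then 1 else 0)})
        = ENNReal.ofReal p ^ k * ENNReal.ofReal (1-p) ^ (m + 1 - k) := by
    intro F hF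
    rw [Finset.mem_powersetCard] at hF
    obtain ⟨hFsub, hFcard⟩ := hF
    have hmnotF : m ∉ F := fun h => absurd (Finset.mem_range.mp (hFsub h)) (lt_irrefl m)
    have hJsub : insert m F ⊆ Finset.range (m+1) := by
      intro i hi
      rcases Finset.mem_insert.mp hi with h' | h'
      · rw [h']; exact Finset.self_mem_range_succ m
      · exact Finset.mem_range_succ_iff.mpr (le_of_lt (Finset.mem_range.mp (hFsub h')))
    rw [gbas_pattern hp0 hp1 hX1 hX0 hYindep (m+1) (insert m F) hJsub]
    rw [Finset.card_insert_of_notMem hmnotF, hFcard]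
    have he : k - 1 + 1 = k := by omega
    rw [he]
  rw [Finset.sum_congr rfl hterm, Finset.sum_const, Finset.card_powersetCard,
    Finset.card_range]
  rw [nsmul_eq_mul]
  rw [← ENNReal.ofReal_natCast (m.choose (k-1)), ← ENNReal.ofReal_pow (by linarith),
    ← ENNReal.ofReal_pow (by linarith), ← ENNReal.ofReal_mul (by positivity),
    ← ENNReal.ofReal_mul (by positivity)]
  have he : m + 1 - k = m - (k-1) := by omega
  rw [he]

end gbasProb2

lemma gbas_cross {Ω : Type*} [MeasurableSpace Ω] {P : Measure Ω} [IsProbabilityMeasure P]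
    {k : ℕ} {X : ℕ → Ω → ℕ} (hXmeas : ∀ n, Measurable (X n))
    {A : ℕ → Ω → ℝ} (hAmeas : ∀ n, Measurable (A n))
    (hindep : iIndepFun
      (Sum.elim (fun n ω => ((X n ω : ℝ))) (fun n ω => A n ω)) P)
    {T : Ω → ℕ} (hT : ∀ ω, T ω = sInf {n | ∑ i ∈ Finset.range n, X i ω = k})
    (m : ℕ) {s : Set ℝ} (hs : MeasurableSet s) :
    P ({ω | T ω = m + 1} ∩ (fun ω => ∑ i ∈ Finset.range (m+1), A i ω) ⁻¹' s)
      = P {ω | T ω = m + 1} * P ((fun ω => ∑ i ∈ Finset.range (m+1), A i ω) ⁻¹' s) := by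
  classical
  set Z := Sum.elim (fun (n : ℕ) (ω : Ω) => ((X n ω : ℝ))) (fun n ω => A n ω) with hZ
  have hZmeas : ∀ i, Measurable (Z i) := by
    rintro (i | i)
    · exact (measurable_from_top (f := fun x : ℕ => (x : ℝ))).comp (hXmeas i)
    · exact hAmeas i
  set eL : ℕ ↪ ℕ ⊕ ℕ := ⟨Sum.inl, Sum.inl_injective⟩ with heL
  set eR : ℕ ↪ ℕ ⊕ ℕ := ⟨Sum.inr, Sum.inr_injective⟩ with heR
  set Sl := (Finset.range (m+1)).map eL with hSl
  set St := (Finset.range (m+1)).map eR with hSt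
  have hdisj : Disjoint Sl St := by
    rw [Finset.disjoint_left]
    rintro x hx hx'
    rw [hSl, Finset.mem_map] at hx
    rw [hSt, Finset.mem_map] at hx'
    obtain ⟨a, _, ha⟩ := hx
    obtain ⟨b, _, hb⟩ := hx'
    rw [← ha] at hb
    simp [heL, heR] at hb
  have hIF := hindep.indepFun_finset Sl St hdisj hZmeas
  set Sl' := (Finset.range m).map eL with hSl'
  have hSl'sub : Sl' ⊆ Sl :=
    Finset.map_subset_map.mpr (Finset.range_subset_range.mpr (by omega))
  set φ : ({x // x ∈ Sl} → ℝ) → ℝ × ℝ := fun v =>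
    (∑ j : {x // x ∈ Sl}, v j,
     ∑ j : {x // x ∈ Sl}, if (j : ℕ ⊕ ℕ) ∈ Sl' then v j else 0) with hφ
  have hφmeas : Measurable φ := by
    apply Measurable.prod
    · show Measurable fun v : {x // x ∈ Sl} → ℝ => ∑ j : {x // x ∈ Sl}, v j
      exact Finset.measurable_sum _ (fun j _ => measurable_pi_apply j)
    · show Measurable fun v : {x // x ∈ Sl} → ℝ =>
        ∑ j : {x // x ∈ Sl}, if (j : ℕ ⊕ ℕ) ∈ Sl' then v j else 0
      apply Finset.measurable_sum
      intro j _
      split_ifs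
      · exact measurable_pi_apply j
      · exact measurable_const
  set ψ : ({x // x ∈ St} → ℝ) → ℝ := fun v => ∑ j : {x // x ∈ St}, v j with hψ
  have hψmeas : Measurable ψ := Finset.measurable_sum _ (fun j _ => measurable_pi_apply j)
  have hcomp := hIF.comp hφmeas hψmeas
  set B : Set (ℝ × ℝ) := (Prod.fst ⁻¹' {(k:ℝ)}) ∩ (Prod.snd ⁻¹' {(k:ℝ)})ᶜ with hB
  have hBmeas : MeasurableSet B :=
    (measurable_fst (measurableSet_singleton ((k:ℕ):ℝ))).inter
      (measurable_snd (measurableSet_singleton ((k:ℕ):ℝ))).compl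
  have key := (indepFun_iff_measure_inter_preimage_eq_mul.mp hcomp) B s hBmeas hs
  have hTset : (φ ∘ (fun a (i : {x // x ∈ Sl}) => Z i a)) ⁻¹' B = {ω | T ω = m + 1} := by
    ext ω
    have hs1 : (∑ j : {x // x ∈ Sl}, Z j ω) = ((∑ i ∈ Finset.range (m+1), X i ω : ℕ) : ℝ) := by
      rw [Finset.sum_coe_sort Sl (fun j => Z j ω), hSl, Finset.sum_map]
      push_cast
      rfl
    have hs2 : (∑ j : {x // x ∈ Sl}, if ((j : ℕ ⊕ ℕ) ∈ Sl') then Z j ω else 0)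
        = ((∑ i ∈ Finset.range m, X i ω : ℕ) : ℝ) := by
      rw [Finset.sum_coe_sort Sl (fun j => if ((j : ℕ ⊕ ℕ) ∈ Sl') then Z j ω else 0),
        Finset.sum_ite_mem, Finset.inter_eq_right.mpr hSl'sub, hSl', Finset.sum_map]
      push_cast
      rfl
    simp only [Set.mem_preimage, Function.comp_apply, hB, Set.mem_inter_iff,
      Set.mem_compl_iff, Set.mem_setOf_eq, hφ]
    rw [hs1, hs2]
    simp only [Set.mem_singleton_iff]
    rw [Nat.cast_inj, Nat.cast_inj, gbas_T_eq_iff hT ω m]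
  have hSset : (ψ ∘ (fun a (i : {x // x ∈ St}) => Z i a))
      = (fun ω => ∑ i ∈ Finset.range (m+1), A i ω) := by
    funext ω
    show (∑ j : {x // x ∈ St}, Z j ω) = _
    rw [Finset.sum_coe_sort St (fun j => Z j ω), hSt, Finset.sum_map]
    rfl
  rw [hTset, hSset] at key
  exact key

/-- Correctness of the GBAS algorithm: with `X₁, X₂, …` iid Bernoulli(p),
`A₁, A₂, …` iid Exponential(1), all jointly independent, `k ≥ 2`, and
`T = min{n : X₁ + ⋯ + X_n = k}`, the random variable
`R = A₁ + ⋯ + A_T` is Gamma(k, p) distributed, `pR/(k-1) ~ Gamma(k, k-1)`,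
and the estimator `p̂ = (k-1)/R` is unbiased: `E[p̂] = p`. -/
theorem gbas_correct {Ω : Type*} [MeasurableSpace Ω]
    (P : Measure Ω) [IsProbabilityMeasure P]
    (p : ℝ) (hp : p ∈ Set.Ioc (0 : ℝ) 1) (k : ℕ) (hk : 2 ≤ k)
    (X : ℕ → Ω → ℕ) (hXmeas : ∀ n, Measurable (X n))
    (A : ℕ → Ω → ℝ) (hAmeas : ∀ n, Measurable (A n))
    (hX1 : ∀ n, P {ω | X n ω = 1} = ENNReal.ofReal p)
    (hX0 : ∀ n, P {ω | X n ω = 0} = ENNReal.ofReal (1 - p))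
    (hAdist : ∀ n, Measure.map (A n) P = expMeasure 1)
    (hindep : iIndepFun
      (Sum.elim (fun n ω => ((X n ω : ℝ))) (fun n ω => A n ω)) P)
    (T : Ω → ℕ)
    (hT : ∀ ω, T ω = sInf {n | ∑ i ∈ Finset.range n, X i ω = k})
    (R : Ω → ℝ)
    (hR : ∀ ω, R ω = ∑ i ∈ Finset.range (T ω), A i ω) :
    Measure.map R P = gammaMeasure k p ∧
    Measure.map (fun ω => p * R ω / ((k : ℝ) - 1)) P
        = gammaMeasure k ((k : ℝ) - 1) ∧
    ∫ ω, ((k : ℝ) - 1) / R ω ∂P = p := by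
  obtain ⟨hp0, hp1⟩ := hp
  have hk1 : 1 ≤ k := by omega
  have hYindep : iIndepFun
      (fun n ω => ((X n ω : ℝ))) P :=
    gbas_precomp ⟨Sum.inl, Sum.inl_injective⟩ hindep
  have hAindep : iIndepFun A P :=
    gbas_precomp ⟨Sum.inr, Sum.inr_injective⟩ hindep
  have hSAmap : ∀ n : ℕ, 1 ≤ n →
      Measure.map (fun ω => ∑ i ∈ Finset.range n, A i ω) P = gammaMeasure n 1 :=
    gbas_map_sum_exp P A hAmeas hAdist hAindep
  have hTmeas : Measurable T := gbas_T_meas hT hXmeas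
  have hSAmeas : ∀ n : ℕ, Measurable (fun ω => ∑ i ∈ Finset.range n, A i ω) :=
    fun n => Finset.measurable_sum _ (fun i _ => hAmeas i)
  have hRmeas : Measurable R := by
    have hg : Measurable (fun q : Ω × ℕ => ∑ i ∈ Finset.range q.2, A i q.1) :=
      measurable_from_prod_countable_left (fun n => hSAmeas n)
    have : R = (fun q : Ω × ℕ => ∑ i ∈ Finset.range q.2, A i q.1) ∘ (fun ω => (ω, T ω)) := by
      funext ω; simp [hR ω]
    rw [this]
    exact hg.comp (measurable_id.prodMk hTmeas)
  have hTd : ∀ m : ℕ, P {ω | T ω = m + 1}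
      = ENNReal.ofReal ((m.choose (k-1) : ℝ) * (p^k * (1-p)^(m - (k-1)))) :=
    gbas_T_dist hp0 hp1 hk hXmeas hX1 hX0 hYindep hT
  have hTn_meas : ∀ n : ℕ, MeasurableSet {ω | T ω = n} := by
    intro n
    exact hTmeas (MeasurableSet.singleton n)
  have hTdisj : Pairwise (Function.onFun Disjoint (fun n => {ω | T ω = n})) := by
    intro a b hab
    rw [Function.onFun, Set.disjoint_iff_forall_ne]
    rintro ω h1 ω' h2 rfl
    simp only [Set.mem_setOf_eq] at h1 h2
    omega
  -- shifted coefficient identity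
  have hcoeff : ∀ m : ℕ,
      ENNReal.ofReal (((m + (k-1)).choose (k-1) : ℝ) * (p^k * (1-p)^((m + (k-1)) - (k-1))))
        = ENNReal.ofReal (((m + (k-1)).choose (k-1) : ℝ) * (p^k * (1-p)^m)) := by
    intro m
    have : m + (k-1) - (k-1) = m := by omega
    rw [this]
  have hzero_small : ∀ i ∈ Finset.range (k-1),
      P {ω | T ω = i + 1} = 0 := by
    intro i hi
    rw [hTd i, Nat.choose_eq_zero_of_lt (Finset.mem_range.mp hi)]
    simp
  have htail : ∑' m : ℕ, P {ω | T ω = m + 1} = 1 := by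
    rw [← Summable.sum_add_tsum_nat_add' (f := fun m => P {ω | T ω = m + 1}) (k := k-1)
      ENNReal.summable]
    rw [Finset.sum_eq_zero hzero_small, zero_add]
    calc ∑' m : ℕ, P {ω | T ω = m + (k-1) + 1}
        = ∑' m : ℕ, ENNReal.ofReal (((m + (k-1)).choose (k-1) : ℝ) * (p^k * (1-p)^m)) := by
          apply tsum_congr
          intro m
          rw [hTd (m + (k-1)), hcoeff m]
      _ = 1 := gbas_coeff_sum_one hp0 hp1 hk1
  have hT0 : P {ω | T ω = 0} = 0 := by
    have hpart : ∑' n : ℕ, P {ω | T ω = n} = 1 := by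
      rw [← measure_iUnion hTdisj hTn_meas]
      have : (⋃ n : ℕ, {ω | T ω = n}) = Set.univ := by
        ext ω; simp
      rw [this, measure_univ]
    rw [tsum_eq_zero_add' ENNReal.summable, htail] at hpart
    have h1 : P {ω | T ω = 0} + 1 = 0 + 1 := by rw [hpart, zero_add]
    rw [add_comm (P {ω | T ω = 0}) 1, add_comm (0:ENNReal) 1] at h1
    exact (ENNReal.add_right_inj (by norm_num)).mp h1
  -- MAIN PART 1
  have hpart1 : Measure.map R P = gammaMeasure k p := by
    ext s hs
    rw [Measure.map_apply hRmeas hs]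
    have hdecomp : R ⁻¹' s = ⋃ n : ℕ, (R ⁻¹' s ∩ {ω | T ω = n}) := by
      rw [← Set.inter_iUnion]
      have : (⋃ n : ℕ, {ω | T ω = n}) = Set.univ := by ext ω; simp
      rw [this, Set.inter_univ]
    rw [hdecomp, measure_iUnion
      (fun a b hab => (hTdisj hab).mono (Set.inter_subset_right) (Set.inter_subset_right))
      (fun n => (hRmeas hs).inter (hTn_meas n))]
    have hterm0 : P (R ⁻¹' s ∩ {ω | T ω = 0}) = 0 :=
      measure_mono_null (Set.inter_subset_right) hT0
    have hterm : ∀ m : ℕ, P (R ⁻¹' s ∩ {ω | T ω = m + 1})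
        = P {ω | T ω = m + 1} * ((gammaMeasure (m+1 : ℕ) 1) s) := by
      intro m
      have hseteq : R ⁻¹' s ∩ {ω | T ω = m + 1}
          = {ω | T ω = m + 1} ∩ (fun ω => ∑ i ∈ Finset.range (m+1), A i ω) ⁻¹' s := by
        ext ω
        simp only [Set.mem_inter_iff, Set.mem_preimage, Set.mem_setOf_eq]
        constructor
        · rintro ⟨h1, h2⟩
          refine ⟨h2, ?_⟩
          rw [hR ω, h2] at h1
          exact h1
        · rintro ⟨h1, h2⟩
          refine ⟨?_, h1⟩
          rw [hR ω, h1]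
          exact h2
      rw [hseteq, gbas_cross hXmeas hAmeas hindep hT m hs]
      congr 1
      rw [← hSAmap (m+1) (by omega), Measure.map_apply (hSAmeas (m+1)) hs]
    rw [tsum_eq_zero_add' ENNReal.summable, hterm0, zero_add]
    have hshift : ∑' m : ℕ, P (R ⁻¹' s ∩ {ω | T ω = m + 1})
        = ∑' m : ℕ, P (R ⁻¹' s ∩ {ω | T ω = (m + (k-1)) + 1}) := by
      rw [← Summable.sum_add_tsum_nat_add' (f := fun m => P (R ⁻¹' s ∩ {ω | T ω = m + 1})) (k := k-1)
        ENNReal.summable]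
      have : ∀ i ∈ Finset.range (k-1), P (R ⁻¹' s ∩ {ω | T ω = i + 1}) = 0 :=
        fun i hi => measure_mono_null (Set.inter_subset_right) (hzero_small i hi)
      rw [Finset.sum_eq_zero this, zero_add]
    rw [hshift]
    have hterm2 : ∀ m : ℕ, P (R ⁻¹' s ∩ {ω | T ω = (m + (k-1)) + 1})
        = ∫⁻ x in s, ENNReal.ofReal (((m + (k-1)).choose (k-1) : ℝ) * (p^k * (1-p)^m))
            * gammaPDF ((m + k : ℕ)) 1 x := by
      intro m
      rw [hterm (m + (k-1)), hTd (m + (k-1)), hcoeff m]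
      have hmk : (m + (k-1)) + 1 = m + k := by omega
      rw [hmk]
      rw [gammaMeasure, withDensity_apply _ hs, ← lintegral_const_mul]
      · exact (gbas_measurable_gammaPDF _ _)
    simp_rw [hterm2]
    rw [← lintegral_tsum (fun m => ((gbas_measurable_gammaPDF ((m + k : ℕ)) 1).const_mul
      _).aemeasurable)]
    rw [gammaMeasure, withDensity_apply _ hs]
    apply setLIntegral_congr_fun hs
    intro x _
    exact gbas_series hp0 hp1 hk x
  refine ⟨hpart1, ?_, ?_⟩
  -- PART 2
  · have hk1R : (0:ℝ) < (k:ℝ) - 1 := by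
      have : (2:ℝ) ≤ (k:ℝ) := by exact_mod_cast hk
      linarith
    have hc : 0 < p / ((k:ℝ) - 1) := by positivity
    have hfun : (fun ω => p * R ω / ((k : ℝ) - 1))
        = (fun x : ℝ => (p / ((k:ℝ)-1)) * x) ∘ R := by
      funext ω
      simp only [Function.comp_apply]
      ring
    rw [hfun, ← Measure.map_map (measurable_const_mul _) hRmeas, hpart1,
      gbas_map_scale hp0 hc]
    congr 1
    field_simp
  -- PART 3
  · have hk1R : (0:ℝ) < (k:ℝ) - 1 := by
      have : (2:ℝ) ≤ (k:ℝ) := by exact_mod_cast hk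
      linarith
    have hfmeas : Measurable (fun x : ℝ => ((k:ℝ) - 1) / x) :=
      measurable_const.div measurable_id
    have hmap : ∫ ω, ((k : ℝ) - 1) / R ω ∂P
        = ∫ x, ((k:ℝ) - 1) / x ∂(gammaMeasure k p) := by
      rw [← hpart1]
      exact (integral_map hRmeas.aemeasurable hfmeas.aestronglyMeasurable).symm
    rw [hmap]
    have hneg : (gammaMeasure k p) (Set.Iio 0) = 0 := by
      rw [gammaMeasure, withDensity_apply _ measurableSet_Iio]
      exact lintegral_gammaPDF_of_nonpos le_rfl
    have hae_nonneg : 0 ≤ᶠ[ae (gammaMeasure k p)] fun x => ((k:ℝ) - 1) / x := by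
      rw [Filter.EventuallyLE, ae_iff]
      apply measure_mono_null _ hneg
      intro x hx
      simp only [Set.mem_setOf_eq, Pi.zero_apply, not_le] at hx
      rcases lt_trichotomy x 0 with h | h | h
      · exact h
      · exfalso; rw [h] at hx; simp at hx
      · exfalso
        have : 0 ≤ ((k:ℝ) - 1) / x := by positivity
        linarith
    rw [integral_eq_lintegral_of_nonneg_ae hae_nonneg hfmeas.aestronglyMeasurable]
    rw [gammaMeasure, lintegral_withDensity_eq_lintegral_mul _
      (gbas_measurable_gammaPDF _ _) (hfmeas.ennreal_ofReal)]
    have hae0 : ∀ᵐ x : ℝ, x ≠ 0 := by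
      rw [ae_iff]
      simpa using measure_singleton (0:ℝ)
    have hptws : ∀ x : ℝ, x ≠ 0 →
        (gammaPDF k p * fun x => ENNReal.ofReal (((k:ℝ) - 1) / x)) x
          = ENNReal.ofReal p * gammaPDF ((k-1:ℕ)) p x := by
      intro x hx
      simp only [Pi.mul_apply]
      by_cases hxpos : 0 < x
      · rw [gammaPDF_of_nonneg hxpos.le, gammaPDF_of_nonneg hxpos.le,
          ← ENNReal.ofReal_mul (by
            have hΓ : 0 < Real.Gamma (k:ℝ) :=
              Real.Gamma_pos_of_pos (by exact_mod_cast (show 0 < k by omega))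
            positivity),
          ← ENNReal.ofReal_mul hp0.le]
        congr 1
        have hkm1 : ((k - 1 : ℕ) : ℝ) = (k:ℝ) - 1 := by
          push_cast [hk1]; ring
        rw [hkm1]
        have hΓeq : Real.Gamma (k:ℝ) = ((k:ℝ) - 1) * Real.Gamma ((k:ℝ) - 1) := by
          have h1 : (k:ℝ) - 1 ≠ 0 := by linarith
          have := Real.Gamma_add_one h1
          rw [show (k:ℝ) - 1 + 1 = (k:ℝ) by ring] at this
          rw [this]
        have hxpow : x ^ ((k:ℝ) - 1) = x ^ ((k:ℝ) - 1 - 1) * x := by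
          rw [← Real.rpow_add_one hx]
          ring_nf
        have hΓpos : 0 < Real.Gamma ((k:ℝ) - 1) := Real.Gamma_pos_of_pos (by linarith)
        have hppow : p ^ (k:ℝ) = p ^ ((k:ℝ) - 1) * p := by
          rw [← Real.rpow_add_one hp0.ne']
          ring_nf
        rw [hΓeq, hxpow, hppow]
        field_simp
      · have hxneg : x < 0 := lt_of_le_of_ne (not_lt.mp hxpos) hx
        rw [gammaPDF_of_neg hxneg, gammaPDF_of_neg hxneg]
        simp
    have hlint : ∫⁻ x, (gammaPDF k p * fun x => ENNReal.ofReal (((k:ℝ) - 1) / x)) x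
        = ∫⁻ x, ENNReal.ofReal p * gammaPDF ((k-1:ℕ)) p x := by
      apply lintegral_congr_ae
      filter_upwards [hae0] with x hx
      exact hptws x hx
    rw [hlint, lintegral_const_mul _ (gbas_measurable_gammaPDF _ _),
      lintegral_gammaPDF_eq_one (by exact_mod_cast (show 0 < k - 1 by omega) : (0:ℝ) < ((k-1:ℕ):ℝ)) hp0]
    · rw [mul_one, ENNReal.toReal_ofReal hp0.le]
end
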